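/- arXiv:1106.5010 — 3 statements merged into one kernel-verified Lean document; each statement's English description precedes it below -/
import Mathlib

section
/- In a J-category, let p : E → B and p' : E' → B be morphisms with the same codomain. If p admits a weak lifting along p', then secat(p') ≤ secat(p). -/
open CategoryTheory CategoryTheory.Limits ZeroObject

universe v u v' u'

variable (C : Type u) [Category.{v} C] [HasZeroObject C] [HasZeroMorphisms C]

/-- A category satisfying axioms (J1)-(J4) of Doeraene's J-categories:
a pointed category with fibrations, cofibrations and weak equivalences. -/
structure PreJCat where
  fib : MorphismProperty C
  cofib : MorphismProperty C
  weq : MorphismProperty C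
  /-- (J1) isomorphisms are trivial cofibrations -/
  iso_triv_cofib : ∀ {X Y : C} (f : X ⟶ Y), IsIso f → cofib f ∧ weq f
  /-- (J1) isomorphisms are trivial fibrations -/
  iso_triv_fib : ∀ {X Y : C} (f : X ⟶ Y), IsIso f → fib f ∧ weq f
  fib_comp : ∀ {X Y Z : C} {f : X ⟶ Y} {g : Y ⟶ Z}, fib f → fib g → fib (f ≫ g)
  cofib_comp : ∀ {X Y Z : C} {f : X ⟶ Y} {g : Y ⟶ Z}, cofib f → cofib g → cofib (f ≫ g)
  /-- (J1) two-out-of-three for weak equivalences -/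
  weq_comp : ∀ {X Y Z : C} {f : X ⟶ Y} {g : Y ⟶ Z}, weq f → weq g → weq (f ≫ g)
  weq_of_comp_left : ∀ {X Y Z : C} {f : X ⟶ Y} {g : Y ⟶ Z}, weq g → weq (f ≫ g) → weq f
  weq_of_comp_right : ∀ {X Y Z : C} {f : X ⟶ Y} {g : Y ⟶ Z}, weq f → weq (f ≫ g) → weq g
  /-- (J2) pullbacks of fibrations exist, and the base extension is a fibration -/
  pb_exists : ∀ {E B B' : C} (p : E ⟶ B) (f : B' ⟶ B), fib p →
    ∃ (P : C) (fb : P ⟶ E) (pb : P ⟶ B'), IsPullback fb pb p f ∧ fib pb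
  /-- (J2) base extensions of weak equivalences along fibrations are weak equivalences -/
  pb_weq : ∀ {E B B' P : C} {p : E ⟶ B} {f : B' ⟶ B} {fb : P ⟶ E} {pb : P ⟶ B'},
    fib p → IsPullback fb pb p f → (weq f → weq fb) ∧ (weq p → weq pb)
  /-- (J2) dual: pushouts of cofibrations exist -/
  po_exists : ∀ {A X Y : C} (i : A ⟶ X) (g : A ⟶ Y), cofib i →
    ∃ (Q : C) (inl : X ⟶ Q) (inr : Y ⟶ Q), IsPushout i g inl inr ∧ cofib inr
  po_weq : ∀ {A X Y Q : C} {i : A ⟶ X} {g : A ⟶ Y} {inl : X ⟶ Q} {inr : Y ⟶ Q},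
    cofib i → IsPushout i g inl inr → (weq g → weq inl) ∧ (weq i → weq inr)
  /-- (J3) F-factorizations exist -/
  F_fac : ∀ {X Y : C} (f : X ⟶ Y), ∃ (Z : C) (τ : X ⟶ Z) (q : Z ⟶ Y),
    weq τ ∧ fib q ∧ τ ≫ q = f
  /-- (J3) C-factorizations exist -/
  C_fac : ∀ {X Y : C} (f : X ⟶ Y), ∃ (Z : C) (i : X ⟶ Z) (σ : Z ⟶ Y),
    cofib i ∧ weq σ ∧ i ≫ σ = f
  /-- (J4) cofibrant replacements exist -/
  cof_replace : ∀ X : C, ∃ (Xb : C) (q : Xb ⟶ X), fib q ∧ weq q ∧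
    (∀ {E : C} (p : E ⟶ Xb), fib p → weq p → ∃ s : Xb ⟶ E, s ≫ p = 𝟙 Xb)

variable {C}

namespace PreJCat

/-- An object is a cofibrant model if every trivial fibration onto it admits a section. -/
def CofModel (P : PreJCat C) (X : C) : Prop :=
  ∀ {E : C} (p : E ⟶ X), P.fib p → P.weq p → ∃ s : X ⟶ E, s ≫ p = 𝟙 X

/-- An object is e-fibrant if the morphism to the zero object is a fibration. -/
def EFibrant (P : PreJCat C) (X : C) : Prop := P.fib (0 : X ⟶ 0)

/-- `f` admits a weak lifting along `g` (all objects being cofibrant models). -/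
def WeakLifting (P : PreJCat C) {A B Cc : C} (f : A ⟶ B) (g : Cc ⟶ B) : Prop :=
  ∃ (E : C) (τ : Cc ⟶ E) (q : E ⟶ B), P.weq τ ∧ P.fib q ∧ τ ≫ q = g ∧
    ∃ s : A ⟶ E, s ≫ q = f

/-- `g` admits a weak section. -/
def HasWeakSection (P : PreJCat C) {E B : C} (g : E ⟶ B) : Prop :=
  P.WeakLifting (𝟙 B) g

/-- `j : J ⟶ B` is a join morphism of `f : A ⟶ B` and `g : Cc ⟶ B`: built from an
F-factorization of `g`, a pullback, a C-factorization and a pushout. -/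
def IsJoin (P : PreJCat C) {A Cc B J : C} (f : A ⟶ B) (g : Cc ⟶ B) (j : J ⟶ B) : Prop :=
  ∃ (E : C) (τ : Cc ⟶ E) (q : E ⟶ B), P.weq τ ∧ P.fib q ∧ τ ≫ q = g ∧
  ∃ (E' Z : C) (fbar : E' ⟶ E) (pbar : E' ⟶ A) (i : E' ⟶ Z) (σ : Z ⟶ E)
    (a : A ⟶ J) (bz : Z ⟶ J),
    IsPullback fbar pbar q f ∧ P.cofib i ∧ P.weq σ ∧ i ≫ σ = fbar ∧
    IsPushout pbar i a bz ∧ a ≫ j = f ∧ bz ≫ j = σ ≫ q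

/-- `IsIterJoin P p n h` : `h` is an `n`-th iterated join morphism `*ⁿ_B E ⟶ B` of `p`. -/
inductive IsIterJoin (P : PreJCat C) {E B : C} (p : E ⟶ B) : ℕ → ∀ {X : C}, (X ⟶ B) → Prop
  | zero : IsIterJoin P p 0 p
  | succ {n : ℕ} {X Y : C} {h : X ⟶ B} {h' : Y ⟶ B} :
      IsIterJoin P p n h → P.IsJoin h p h' → IsIterJoin P p (n + 1) h'

/-- The Ganea-type sectional category of a morphism. -/
noncomputable def Gsecat (P : PreJCat C) {E B : C} (p : E ⟶ B) : ℕ∞ :=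
  sInf {n : ℕ∞ | ∃ m : ℕ, n = (m : ℕ∞) ∧
    ∃ (X : C) (h : X ⟶ B), P.IsIterJoin p m h ∧ P.HasWeakSection h}

end PreJCat

/-- `p1, p2` exhibit `Pd` as a binary product of `X` and `Y`. -/
def IsBinProd {X Y Pd : C} (p1 : Pd ⟶ X) (p2 : Pd ⟶ Y) : Prop :=
  Nonempty (IsLimit (BinaryFan.mk p1 p2))

namespace PreJCat

/-- `IsFatWedge P p n j Δ` : `j : Tⁿ(p) ⟶ B^{n+1}` is an `n`-th fat wedge morphism of `p`
together with the diagonal `Δ : B ⟶ B^{n+1}`. -/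
inductive IsFatWedge (P : PreJCat C) {E B : C} (p : E ⟶ B) :
    ℕ → ∀ {T Pw : C}, (T ⟶ Pw) → (B ⟶ Pw) → Prop
  | zero : IsFatWedge P p 0 p (𝟙 B)
  | succ {n : ℕ} {T Pn : C} {j : T ⟶ Pn} {Δ : B ⟶ Pn}
      (hprev : IsFatWedge P p n j Δ)
      {Pn1 : C} {pr1 : Pn1 ⟶ Pn} {pr2 : Pn1 ⟶ B} (hP : IsBinProd pr1 pr2)
      {TB : C} {q1 : TB ⟶ T} {q2 : TB ⟶ B} (hTB : IsBinProd q1 q2)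
      {PE : C} {r1 : PE ⟶ Pn} {r2 : PE ⟶ E} (hPE : IsBinProd r1 r2)
      {jB : TB ⟶ Pn1} (hjB : jB ≫ pr1 = q1 ≫ j ∧ jB ≫ pr2 = q2)
      {pP : PE ⟶ Pn1} (hpP : pP ≫ pr1 = r1 ∧ pP ≫ pr2 = r2 ≫ p)
      {Tn1 : C} {j' : Tn1 ⟶ Pn1} (hjoin : P.IsJoin jB pP j')
      {Δ' : B ⟶ Pn1} (hΔ : Δ' ≫ pr1 = Δ ∧ Δ' ≫ pr2 = 𝟙 B) :
      IsFatWedge P p (n + 1) j' Δ'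

/-- The Whitehead-type sectional category of a morphism with e-fibrant codomain. -/
noncomputable def WsecatE (P : PreJCat C) {E B : C} (p : E ⟶ B) : ℕ∞ :=
  sInf {n : ℕ∞ | ∃ m : ℕ, n = (m : ℕ∞) ∧
    ∃ (T Pw : C) (j : T ⟶ Pw) (Δ : B ⟶ Pw), P.IsFatWedge p m j Δ ∧ P.WeakLifting Δ j}

/-- The Whitehead-type sectional category of an arbitrary morphism, via e-fibrant
replacements of the codomain. -/
noncomputable def Wsecat (P : PreJCat C) {E B : C} (p : E ⟶ B) : ℕ∞ :=
  ⨅ (F : C) (τ : B ⟶ F) (_ : P.weq τ ∧ P.EFibrant F), P.WsecatE (p ≫ τ)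

/-- A commutative square is a homotopy pullback. -/
def IsHPB (P : PreJCat C) {D A Cc B : C} (f' : D ⟶ Cc) (g' : D ⟶ A)
    (g : Cc ⟶ B) (f : A ⟶ B) : Prop :=
  f' ≫ g = g' ≫ f ∧ ∃ (E : C) (τ : Cc ⟶ E) (q : E ⟶ B), P.weq τ ∧ P.fib q ∧ τ ≫ q = g ∧
    ∃ (Pt : C) (pr1 : Pt ⟶ E) (pr2 : Pt ⟶ A), IsPullback pr1 pr2 q f ∧
      ∃ w : D ⟶ Pt, P.weq w ∧ w ≫ pr1 = f' ≫ τ ∧ w ≫ pr2 = g'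

/-- A commutative square is a homotopy pushout. -/
def IsHPO (P : PreJCat C) {A B Cc D : C} (f : A ⟶ B) (g : A ⟶ Cc)
    (i' : B ⟶ D) (j' : Cc ⟶ D) : Prop :=
  f ≫ i' = g ≫ j' ∧ ∃ (Z : C) (i : A ⟶ Z) (σ : Z ⟶ B), P.cofib i ∧ P.weq σ ∧ i ≫ σ = f ∧
    ∃ (Q : C) (inl : Z ⟶ Q) (inr : Cc ⟶ Q), IsPushout i g inl inr ∧
      ∃ w : Q ⟶ D, P.weq w ∧ inl ≫ w = σ ≫ i' ∧ inr ≫ w = j'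

/-- `A-A'-B'-B` is a weak pullback over `b : B ⟶ B'` (all objects cofibrant models). -/
def IsWeakPullback (P : PreJCat C) {A B A' B' : C}
    (f : A ⟶ B) (f' : A' ⟶ B') (b : B ⟶ B') : Prop :=
  ∃ (X : C) (τ : A' ⟶ X) (q : X ⟶ B'), P.weq τ ∧ P.fib q ∧ τ ≫ q = f' ∧
    ∃ x : A ⟶ X, P.IsHPB x f q b

/-- `g : G ⟶ B` is an `n`-th Ganea map of `B`: the `n`-th iterated join of `0 ⟶ B`. -/
def IsGaneaMap (P : PreJCat C) (B : C) (n : ℕ) {G : C} (g : G ⟶ B) : Prop :=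
  P.IsIterJoin (0 : (0 : C) ⟶ B) n g

/-- The Lusternik-Schnirelmann category of an object. -/
noncomputable def catObj (P : PreJCat C) (B : C) : ℕ∞ :=
  sInf {n : ℕ∞ | ∃ m : ℕ, n = (m : ℕ∞) ∧
    ∃ (G : C) (g : G ⟶ B), P.IsGaneaMap B m g ∧ P.HasWeakSection g}

/-- The Lusternik-Schnirelmann category of a morphism `b : B ⟶ B'`:
least `n` such that `b` admits a weak lifting along the `n`-th Ganea map of `B'`. -/
noncomputable def catMor (P : PreJCat C) {B B' : C} (b : B ⟶ B') : ℕ∞ :=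
  sInf {n : ℕ∞ | ∃ m : ℕ, n = (m : ℕ∞) ∧
    ∃ (G : C) (g : G ⟶ B'), P.IsGaneaMap B' m g ∧ P.WeakLifting b g}

/-- One step of a zigzag: a weak equivalence of morphisms in the arrow category. -/
def MorWeqStep (P : PreJCat C) (u v : Arrow C) : Prop :=
  ∃ h : u ⟶ v, P.weq h.left ∧ P.weq h.right

/-- Two morphisms are weakly equivalent: joined by a finite zigzag of weak
equivalences of morphisms. -/
def WeaklyEquivMor (P : PreJCat C) (u v : Arrow C) : Prop :=
  Relation.EqvGen P.MorWeqStep u v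

def ObjWeqStep (P : PreJCat C) (X Y : C) : Prop := ∃ f : X ⟶ Y, P.weq f

/-- Two objects are weakly equivalent: joined by a finite zigzag of weak equivalences. -/
def WeaklyEquivObj (P : PreJCat C) (X Y : C) : Prop :=
  Relation.EqvGen P.ObjWeqStep X Y

/-- The abstract topological complexity of an e-fibrant object:
the sectional category of the diagonal `B ⟶ B × B`. -/
noncomputable def TCE (P : PreJCat C) (B : C) : ℕ∞ :=
  ⨅ (Pd : C) (p1 : Pd ⟶ B) (p2 : Pd ⟶ B) (_ : IsBinProd p1 p2)
    (Δ : B ⟶ Pd) (_ : Δ ≫ p1 = 𝟙 B ∧ Δ ≫ p2 = 𝟙 B), P.Gsecat Δ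

/-- The abstract topological complexity of an arbitrary object, via e-fibrant
replacements. -/
noncomputable def TC (P : PreJCat C) (B : C) : ℕ∞ :=
  ⨅ (F : C) (τ : B ⟶ F) (_ : P.weq τ ∧ P.EFibrant F), P.TCE F

end PreJCat

variable (C)

/-- A J-category: (J1)-(J4) together with the cube axiom (J5). -/
structure JCat extends PreJCat C where
  /-- (J5) the cube axiom: in a commutative cube whose bottom face is a homotopy
  pushout and whose vertical faces are homotopy pullbacks, the top face is a
  homotopy pushout. -/
  cube : ∀ {X00 X01 X10 X11 Y00 Y01 Y10 Y11 : C}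
    {tf : X00 ⟶ X01} {tg : X00 ⟶ X10} {ti : X01 ⟶ X11} {tj : X10 ⟶ X11}
    {bf : Y00 ⟶ Y01} {bg : Y00 ⟶ Y10} {bi : Y01 ⟶ Y11} {bj : Y10 ⟶ Y11}
    {v00 : X00 ⟶ Y00} {v01 : X01 ⟶ Y01} {v10 : X10 ⟶ Y10} {v11 : X11 ⟶ Y11},
    tf ≫ ti = tg ≫ tj →
    toPreJCat.IsHPO bf bg bi bj →
    toPreJCat.IsHPB tf v00 v01 bf →
    toPreJCat.IsHPB tg v00 v10 bg →
    toPreJCat.IsHPB ti v01 v11 bi →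
    toPreJCat.IsHPB tj v10 v11 bj →
    toPreJCat.IsHPO tf tg ti tj

variable {C}

/-- A modelization functor: preserves weak equivalences, homotopy pullbacks and
homotopy pushouts. -/
structure ModelizationFunctor {D : Type u'} [Category.{v'} D] [HasZeroObject D]
    [HasZeroMorphisms D] (P : PreJCat C) (Q : PreJCat D) where
  F : C ⥤ D
  map_weq : ∀ {X Y : C} (f : X ⟶ Y), P.weq f → Q.weq (F.map f)
  map_hpb : ∀ {Dd A Cc B : C} {f' : Dd ⟶ Cc} {g' : Dd ⟶ A} {g : Cc ⟶ B} {f : A ⟶ B},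
    P.IsHPB f' g' g f → Q.IsHPB (F.map f') (F.map g') (F.map g) (F.map f)
  map_hpo : ∀ {A B Cc Dd : C} {f : A ⟶ B} {g : A ⟶ Cc} {i' : B ⟶ Dd} {j' : Cc ⟶ Dd},
    P.IsHPO f g i' j' → Q.IsHPO (F.map f) (F.map g) (F.map i') (F.map j')


namespace PreJCat

lemma weq_id' (P : PreJCat C) (X : C) : P.weq (𝟙 X) :=
  (P.iso_triv_fib (𝟙 X) inferInstance).2

/-- The φ-lemma: a map `r : Y ⟶ B` lifts into a fibration `q` provided there is a
weak equivalence `τ : A ⟶ Y` and a strict lift of `τ ≫ r` along `q`. -/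
lemma lift_of_weq (P : PreJCat C) (hc : ∀ X : C, P.CofModel X)
    {A Y Ee B : C} {τ : A ⟶ Y} {q : Ee ⟶ B} (r : Y ⟶ B) {m : A ⟶ Ee}
    (hτ : P.weq τ) (hq : P.fib q) (hm : m ≫ q = τ ≫ r) :
    ∃ φ : Y ⟶ Ee, φ ≫ q = r := by
  obtain ⟨Pt, fb, pb, hpb, hfib⟩ := P.pb_exists q r hq
  obtain ⟨W, τW, qW, hτW, hqW, hfac⟩ := P.F_fac (hpb.lift m τ hm)
  have hg : P.fib (qW ≫ pb) := P.fib_comp hqW hfib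
  have hcomp : τW ≫ qW ≫ pb = τ := by
    rw [← Category.assoc, hfac, hpb.lift_snd]
  have hwg : P.weq (qW ≫ pb) := P.weq_of_comp_right hτW (by rw [hcomp]; exact hτ)
  obtain ⟨sY, hsY⟩ := hc Y (qW ≫ pb) hg hwg
  refine ⟨sY ≫ qW ≫ fb, ?_⟩
  have h1 : fb ≫ q = pb ≫ r := hpb.w
  calc (sY ≫ qW ≫ fb) ≫ q = sY ≫ qW ≫ fb ≫ q := by simp [Category.assoc]
    _ = sY ≫ qW ≫ pb ≫ r := by rw [h1]
    _ = (sY ≫ (qW ≫ pb)) ≫ r := by simp [Category.assoc]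
    _ = r := by rw [hsY, Category.id_comp]

/-- Transitivity of weak liftings (all objects being cofibrant models). -/
lemma weakLifting_trans (P : PreJCat C) (hc : ∀ X : C, P.CofModel X)
    {A Cc Dd B : C} {f : A ⟶ B} {g : Cc ⟶ B} {k : Dd ⟶ B}
    (h1 : P.WeakLifting f g) (h2 : P.WeakLifting g k) : P.WeakLifting f k := by
  obtain ⟨Ee, τ, q, hτ, hq, hfac, s, hs⟩ := h1
  obtain ⟨Ee', τ', q', hτ', hq', hfac', s', hs'⟩ := h2
  obtain ⟨φ, hφ⟩ := P.lift_of_weq hc q hτ hq' (show s' ≫ q' = τ ≫ q by rw [hs', ← hfac])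
  exact ⟨Ee', τ', q', hτ', hq', hfac', s ≫ φ, by rw [Category.assoc, hφ, hs]⟩

/-- A commutative square whose two "vertical" legs are weak equivalences is a
homotopy pullback. -/
lemma isHPB_of_weq (P : PreJCat C) {D A Cc B : C} {f' : D ⟶ Cc} {g' : D ⟶ A}
    {g : Cc ⟶ B} {f : A ⟶ B} (hcomm : f' ≫ g = g' ≫ f)
    (hg' : P.weq g') (hg : P.weq g) : P.IsHPB f' g' g f := by
  obtain ⟨Eg, τ, q, hτ, hq, hfac⟩ := P.F_fac g
  have hqw : P.weq q := P.weq_of_comp_right hτ (by rw [hfac]; exact hg)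
  obtain ⟨Pt, fb, pb, hpb, hfb⟩ := P.pb_exists q f hq
  have hcomm2 : (f' ≫ τ) ≫ q = g' ≫ f := by rw [Category.assoc, hfac, hcomm]
  refine ⟨hcomm, Eg, τ, q, hτ, hq, hfac, Pt, fb, pb, hpb,
    hpb.lift (f' ≫ τ) g' hcomm2, ?_, hpb.lift_fst _ _ _, hpb.lift_snd _ _ _⟩
  have hpbw : P.weq pb := (P.pb_weq hq hpb).2 hqw
  exact P.weq_of_comp_left hpbw (by rw [hpb.lift_snd]; exact hg')

end PreJCat

/-- The join step: if `p` weakly lifts along `p'` and `h` weakly lifts along `h'`,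
then any join of `(h, p)` weakly lifts along some join of `(h', p')`. -/
lemma JCat.join_step (J : JCat C) (hc : ∀ X : C, J.toPreJCat.CofModel X)
    {E E' B X X' XJ : C} {p : E ⟶ B} {p' : E' ⟶ B} {h : X ⟶ B} {h' : X' ⟶ B}
    {j : XJ ⟶ B}
    (hpp' : J.toPreJCat.WeakLifting p p')
    (hhh' : J.toPreJCat.WeakLifting h h')
    (hj : J.toPreJCat.IsJoin h p j) :
    ∃ (XJ' : C) (j' : XJ' ⟶ B),
      J.toPreJCat.IsJoin h' p' j' ∧ J.toPreJCat.WeakLifting j j' := by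
  set P := J.toPreJCat with hP
  obtain ⟨E₀, τ₀, q₀, hτ₀, hq₀, hfac₀, s₀, hs₀⟩ := hpp'
  obtain ⟨E₁, τ₁, q₁, hτ₁, hq₁, hfac₁, s₁, hs₁⟩ := hhh'
  obtain ⟨Ep, τp, qp, hτp, hqp, hfacp, D, Z, fbar, pbar, i, σ, a, bz,
    hpbD, hcofi, hweqσ, hiσ, hpoJ, haj, hbzj⟩ := hj
  -- build the join of (h', p')
  obtain ⟨D', fbar', pbar', hpbD', hfibpbar'⟩ := P.pb_exists q₀ h' hq₀
  obtain ⟨Z', i', σ', hcofi', hweqσ', hfaci'⟩ := P.C_fac fbar'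
  obtain ⟨J', bz', a', hpoJ'0, hcofa'⟩ := P.po_exists i' pbar' hcofi'
  have hpoJ' : IsPushout pbar' i' a' bz' := hpoJ'0.flip
  have hdescw : pbar' ≫ h' = i' ≫ (σ' ≫ q₀) := by
    rw [← hpbD'.w, ← hfaci', Category.assoc]
  set j' : J' ⟶ B := hpoJ'.desc h' (σ' ≫ q₀) hdescw with hj'def
  have haj' : a' ≫ j' = h' := hpoJ'.inl_desc _ _ _
  have hbzj' : bz' ≫ j' = σ' ≫ q₀ := hpoJ'.inr_desc _ _ _
  have hjoin' : P.IsJoin h' p' j' :=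
    ⟨E₀, τ₀, q₀, hτ₀, hq₀, hfac₀, D', Z', fbar', pbar', i', σ', a', bz',
      hpbD', hcofi', hweqσ', hfaci', hpoJ', haj', hbzj'⟩
  -- fibration replacement of j'
  obtain ⟨E₂, τ₂, q₂, hτ₂, hq₂, hfac₂⟩ := P.F_fac j'
  -- comparison of the fibration replacements of p and p'
  obtain ⟨ψ, hψ⟩ := P.lift_of_weq hc qp hτp hq₀ (show s₀ ≫ q₀ = τp ≫ qp by
    rw [hs₀, hfacp])
  -- the pullback over the fibration replacements
  obtain ⟨DK, fbarK, pbarK, hpbDK, hfibpbarK⟩ := P.pb_exists q₀ q₁ hq₀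
  have hδw : (fbar ≫ ψ) ≫ q₀ = (pbar ≫ s₁) ≫ q₁ := by
    rw [Category.assoc, hψ, Category.assoc, hs₁, hpbD.w]
  set δ : D ⟶ DK := hpbDK.lift (fbar ≫ ψ) (pbar ≫ s₁) hδw with hδdef
  have hδ1 : δ ≫ fbarK = fbar ≫ ψ := hpbDK.lift_fst _ _ _
  have hδ2 : δ ≫ pbarK = pbar ≫ s₁ := hpbDK.lift_snd _ _ _
  have hδ'w : fbar' ≫ q₀ = (pbar' ≫ τ₁) ≫ q₁ := by
    rw [hpbD'.w, Category.assoc, hfac₁]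
  set δ' : D' ⟶ DK := hpbDK.lift fbar' (pbar' ≫ τ₁) hδ'w with hδ'def
  have hδ'1 : δ' ≫ fbarK = fbar' := hpbDK.lift_fst _ _ _
  have hδ'2 : δ' ≫ pbarK = pbar' ≫ τ₁ := hpbDK.lift_snd _ _ _
  -- glue Z and Z' onto DK, then C-factorize
  obtain ⟨W₀, inl₁, inr₁, hpoW₀, hcofinr₁⟩ := P.po_exists i δ hcofi
  have hm₀w : i ≫ (σ ≫ ψ) = δ ≫ fbarK := by
    rw [← Category.assoc, hiσ, ← hδ1]
  set m₀ : W₀ ⟶ E₀ := hpoW₀.desc (σ ≫ ψ) fbarK hm₀w with hm₀def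
  have hinl₁m₀ : inl₁ ≫ m₀ = σ ≫ ψ := hpoW₀.inl_desc _ _ _
  have hinr₁m₀ : inr₁ ≫ m₀ = fbarK := hpoW₀.inr_desc _ _ _
  obtain ⟨W₁, inl₂, inr₂, hpoW₁, hcofinr₂⟩ := P.po_exists i' (δ' ≫ inr₁) hcofi'
  have hm₁w : i' ≫ σ' = (δ' ≫ inr₁) ≫ m₀ := by
    rw [hfaci', Category.assoc, hinr₁m₀, ← hδ'1]
  set m₁ : W₁ ⟶ E₀ := hpoW₁.desc σ' m₀ hm₁w with hm₁def
  have hinl₂m₁ : inl₂ ≫ m₁ = σ' := hpoW₁.inl_desc _ _ _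
  have hinr₂m₁ : inr₂ ≫ m₁ = m₀ := hpoW₁.inr_desc _ _ _
  obtain ⟨ZK, c, σK, hcofc, hweqσK, hfacc⟩ := P.C_fac m₁
  set iK : DK ⟶ ZK := inr₁ ≫ inr₂ ≫ c with hiKdef
  have hcofiK : P.cofib iK := P.cofib_comp hcofinr₁ (P.cofib_comp hcofinr₂ hcofc)
  have hiKσK : iK ≫ σK = fbarK := by
    rw [hiKdef, Category.assoc, Category.assoc, hfacc, hinr₂m₁, hinr₁m₀]
  set ζ : Z ⟶ ZK := inl₁ ≫ inr₂ ≫ c with hζdef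
  have hiζ : i ≫ ζ = δ ≫ iK := by
    rw [hζdef, hiKdef, ← Category.assoc, hpoW₀.w, Category.assoc]
  have hζσ : ζ ≫ σK = σ ≫ ψ := by
    rw [hζdef, Category.assoc, Category.assoc, hfacc, hinr₂m₁, hinl₁m₀]
  set ζ' : Z' ⟶ ZK := inl₂ ≫ c with hζ'def
  have hiζ' : i' ≫ ζ' = δ' ≫ iK := by
    rw [hζ'def, hiKdef, ← Category.assoc, hpoW₁.w, Category.assoc, Category.assoc]
  have hζ'σ : ζ' ≫ σK = σ' := by rw [hζ'def, Category.assoc, hfacc, hinl₂m₁]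
  have hweqζ' : P.weq ζ' := P.weq_of_comp_left hweqσK (by rw [hζ'σ]; exact hweqσ')
  -- the fibrewise join K of q₁ and q₀
  obtain ⟨K, bK, aK, hpoK, hcofaK⟩ := P.po_exists iK pbarK hcofiK
  have hkw : iK ≫ (σK ≫ q₀) = pbarK ≫ q₁ := by
    rw [← Category.assoc, hiKσK, hpbDK.w]
  set k : K ⟶ B := hpoK.desc (σK ≫ q₀) q₁ hkw with hkdef
  have hbKk : bK ≫ k = σK ≫ q₀ := hpoK.inl_desc _ _ _
  have haKk : aK ≫ k = q₁ := hpoK.inr_desc _ _ _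
  -- the strict map G : XJ ⟶ K over B
  have hGw : pbar ≫ (s₁ ≫ aK) = i ≫ (ζ ≫ bK) := by
    simp only [← Category.assoc]
    rw [← hδ2, hiζ]
    simp only [Category.assoc]
    rw [hpoK.w]
  set G : XJ ⟶ K := hpoJ.desc (s₁ ≫ aK) (ζ ≫ bK) hGw with hGdef
  have haG : a ≫ G = s₁ ≫ aK := hpoJ.inl_desc _ _ _
  have hbzG : bz ≫ G = ζ ≫ bK := hpoJ.inr_desc _ _ _
  have hGk : G ≫ k = j := by
    apply hpoJ.hom_ext
    · rw [← Category.assoc, haG, Category.assoc, haKk, hs₁, haj]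
    · simp only [← Category.assoc]
      rw [hbzG]
      simp only [Category.assoc]
      rw [hbKk, ← Category.assoc ζ σK q₀, hζσ, Category.assoc, hψ, hbzj]
  -- the cube axiom
  have hδ'pb : IsPullback δ' pbar' pbarK τ₁ := by
    have houter : IsPullback (δ' ≫ fbarK) pbar' q₀ (τ₁ ≫ q₁) := by
      rw [hδ'1, hfac₁]; exact hpbD'
    exact IsPullback.of_right houter hδ'2 hpbDK
  have hweqδ' : P.weq δ' := (P.pb_weq hfibpbarK hδ'pb).1 hτ₁
  have hbot : P.IsHPO iK pbarK bK aK :=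
    ⟨hpoK.w, ZK, iK, 𝟙 ZK, hcofiK, P.weq_id' ZK, Category.comp_id _, K, bK, aK,
      hpoK, 𝟙 K, P.weq_id' K, by simp, by simp⟩
  have htopcomm : i' ≫ (ζ' ≫ bK) = pbar' ≫ (τ₁ ≫ aK) := by
    simp only [← Category.assoc]
    rw [← hδ'2, hiζ']
    simp only [Category.assoc]
    rw [hpoK.w]
  have htop : P.IsHPO i' pbar' (ζ' ≫ bK) (τ₁ ≫ aK) :=
    J.cube htopcomm hbot
      (P.isHPB_of_weq hiζ' hweqδ' hweqζ')
      (P.isHPB_of_weq hδ'2.symm hweqδ' hτ₁)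
      (P.isHPB_of_weq (Category.comp_id _) hweqζ' (P.weq_id' K))
      (P.isHPB_of_weq (Category.comp_id _) hτ₁ (P.weq_id' K))
  obtain ⟨-, Z₀, i₀, σ₀, hcofi₀, hweqσ₀, hfaci₀, Q₀, inl₀, inr₀, hpoQ₀,
    w, hweqw, hinlw, hinrw⟩ := htop
  -- comparison Q₀ ⟶ J' over B
  have hc₀w : i₀ ≫ (σ₀ ≫ bz') = pbar' ≫ a' := by
    rw [← Category.assoc, hfaci₀, hpoJ'.w]
  set c₀ : Q₀ ⟶ J' := hpoQ₀.desc (σ₀ ≫ bz') a' hc₀w with hc₀def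
  have hinl₀c₀ : inl₀ ≫ c₀ = σ₀ ≫ bz' := hpoQ₀.inl_desc _ _ _
  have hinr₀c₀ : inr₀ ≫ c₀ = a' := hpoQ₀.inr_desc _ _ _
  have hc₀j' : c₀ ≫ j' = w ≫ k := by
    apply hpoQ₀.hom_ext
    · simp only [← Category.assoc]
      rw [hinl₀c₀, hinlw]
      simp only [Category.assoc]
      rw [hbzj', hbKk, ← Category.assoc ζ' σK q₀, hζ'σ]
    · simp only [← Category.assoc]
      rw [hinr₀c₀, hinrw, haj']
      simp only [Category.assoc]
      rw [haKk, hfac₁]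
  -- transfer the lift along the weak equivalence w
  obtain ⟨φK, hφK⟩ := P.lift_of_weq hc k hweqw hq₂
    (show (c₀ ≫ τ₂) ≫ q₂ = w ≫ k by rw [Category.assoc, hfac₂, hc₀j'])
  exact ⟨J', j', hjoin', E₂, τ₂, q₂, hτ₂, hq₂, hfac₂, G ≫ φK,
    by rw [Category.assoc, hφK, hGk]⟩

/-- Iterated joins of `p'` receive weak liftings from iterated joins of `p`. -/
lemma JCat.iterJoin_weakLifting (J : JCat C) (hc : ∀ X : C, J.toPreJCat.CofModel X)
    {E E' B : C} {p : E ⟶ B} {p' : E' ⟶ B}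
    (hpp' : J.toPreJCat.WeakLifting p p') :
    ∀ {m : ℕ} {X : C} {h : X ⟶ B}, J.toPreJCat.IsIterJoin p m h →
      ∃ (X' : C) (h' : X' ⟶ B),
        J.toPreJCat.IsIterJoin p' m h' ∧ J.toPreJCat.WeakLifting h h' := by
  intro m X h hit
  induction hit with
  | zero => exact ⟨E', p', .zero, hpp'⟩
  | succ hprev hjoin ih =>
      obtain ⟨X', h', hit', hwl⟩ := ih
      obtain ⟨XJ', j', hj', hwlj⟩ := J.join_step hc hpp' hwl hjoin
      exact ⟨XJ', j', .succ hit' hj', hwlj⟩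

/-- In a J-category, if `p` admits a weak lifting along `p'`
(same codomain), then `secat p' ≤ secat p`. -/
theorem Gsecat_le_of_weakLifting (J : JCat C)
    (hc : ∀ X : C, J.toPreJCat.CofModel X)
    {E E' B : C} (p : E ⟶ B) (p' : E' ⟶ B)
    (h : J.toPreJCat.WeakLifting p p') :
    J.toPreJCat.Gsecat p' ≤ J.toPreJCat.Gsecat p := by
  apply sInf_le_sInf
  rintro n ⟨m, hn, X, hX, hit, hsec⟩
  obtain ⟨X', h', hit', hwl⟩ := J.iterJoin_weakLifting hc h hit
  exact ⟨m, hn, X', h', hit', J.toPreJCat.weakLifting_trans hc hsec hwl⟩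
end

section
/- Let μ : C → D be a modelization functor between J-categories. Then for any morphism p : E → B in C, secat(μ(p)) ≤ secat(p). -/
open CategoryTheory CategoryTheory.Limits ZeroObject

universe v u v' u'

variable (C : Type u) [Category.{v} C] [HasZeroObject C] [HasZeroMorphisms C]

variable {C}

variable (C)

variable {C}

set_option linter.unusedSectionVars false

section AuxHelpers

variable {𝒟 : Type*} [Category 𝒟] [HasZeroObject 𝒟] [HasZeroMorphisms 𝒟]
variable (K : PreJCat 𝒟)

lemma PreJCat.weq_id (X : 𝒟) : K.weq (𝟙 X) := (K.iso_triv_fib (𝟙 X) inferInstance).2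

lemma PreJCat.fib_of_isPullback {P E B B' : 𝒟} {p : E ⟶ B} {f : B' ⟶ B}
    {fb : P ⟶ E} {pb : P ⟶ B'} (hp : K.fib p) (h : IsPullback fb pb p f) : K.fib pb := by
  obtain ⟨P₀, fb₀, pb₀, h₀, hf₀⟩ := K.pb_exists p f hp
  have : (h.isoIsPullback _ _ h₀).hom ≫ pb₀ = pb := IsPullback.isoIsPullback_hom_snd _ _ h h₀
  rw [← this]
  exact K.fib_comp (K.iso_triv_fib _ inferInstance).1 hf₀

lemma PreJCat.cofib_inr_of_isPushout {A X Y Q : 𝒟} {i : A ⟶ X} {g : A ⟶ Y}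
    {inl : X ⟶ Q} {inr : Y ⟶ Q} (hi : K.cofib i) (h : IsPushout i g inl inr) :
    K.cofib inr := by
  obtain ⟨Q₀, inl₀, inr₀, h₀, hc₀⟩ := K.po_exists i g hi
  have : inr₀ ≫ (h₀.isoIsPushout _ _ h).hom = inr := IsPushout.inr_isoIsPushout_hom _ _ h₀ h
  rw [← this]
  exact K.cofib_comp hc₀ (K.iso_triv_cofib _ inferInstance).1

lemma PreJCat.cofib_inl_of_isPushout {A X Y Q : 𝒟} {i : A ⟶ X} {g : A ⟶ Y}
    {inl : X ⟶ Q} {inr : Y ⟶ Q} (hg : K.cofib g) (h : IsPushout i g inl inr) :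
    K.cofib inl :=
  K.cofib_inr_of_isPushout hg h.flip

/-- One step of a zigzag of weak equivalences over a fixed base. -/
def Rs (K : PreJCat 𝒟) {B₀ : 𝒟} (u v : Σ X : 𝒟, X ⟶ B₀) : Prop :=
  ∃ e : u.1 ⟶ v.1, K.weq e ∧ e ≫ v.2 = u.2

/-- Zigzag of weak equivalences over a fixed base. -/
def Rz (K : PreJCat 𝒟) {B₀ : 𝒟} : (Σ X : 𝒟, X ⟶ B₀) → (Σ X : 𝒟, X ⟶ B₀) → Prop :=
  Relation.EqvGen (Rs K)

end AuxHelpers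
section AuxGluing

variable {𝒟 : Type*} [Category 𝒟] [HasZeroObject 𝒟] [HasZeroMorphisms 𝒟]
variable (K : PreJCat 𝒟)

/-- Comparison step: a pushout along a cofibration maps by a weak equivalence into the
pushout along the composition with a trivial cofibration, compatibly over a base. -/
lemma chiStep {B₀ N X Z M Q QM : 𝒟} {g : N ⟶ X} {i : N ⟶ Z} {t : Z ⟶ M}
    (htc : K.cofib t) (htw : K.weq t)
    {a : X ⟶ Q} {b : Z ⟶ Q} (hQ : IsPushout g i a b)
    {aM : X ⟶ QM} {bM : M ⟶ QM} (hQM : IsPushout g (i ≫ t) aM bM)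
    {x : X ⟶ B₀} {y : M ⟶ B₀} {u : Q ⟶ B₀} (hau : a ≫ u = x) (hbu : b ≫ u = t ≫ y)
    {uM : QM ⟶ B₀} (haM : aM ≫ uM = x) (hbM : bM ≫ uM = y) :
    Rs K (⟨Q, u⟩ : Σ X : 𝒟, X ⟶ B₀) ⟨QM, uM⟩ := by
  have hw : g ≫ aM = i ≫ t ≫ bM := by rw [hQM.w, Category.assoc]
  set χ : Q ⟶ QM := hQ.desc aM (t ≫ bM) hw with hχ
  have haχ : a ≫ χ = aM := hQ.inl_desc _ _ _
  have hbχ : b ≫ χ = t ≫ bM := hQ.inr_desc _ _ _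
  have hbig : IsPushout g (i ≫ t) (a ≫ χ) bM := by rw [haχ]; exact hQM
  have hright : IsPushout b t χ bM := IsPushout.of_top hbig hbχ hQ
  have hweq : K.weq χ := (K.po_weq htc hright.flip).2 htw
  refine ⟨χ, hweq, ?_⟩
  apply hQ.hom_ext
  · rw [← Category.assoc, haχ, haM, hau]
  · rw [← Category.assoc, hbχ, Category.assoc, hbM, hbu]

/-- Core gluing: pushouts of a span along two "cylinders" of the same map are
zigzag-equivalent over the base. -/
lemma coreG {B₀ N X Z₁ Z₂ W Q₁ Q₂ : 𝒟} {g : N ⟶ X}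
    {i₁ : N ⟶ Z₁} (hi₁ : K.cofib i₁) {i₂ : N ⟶ Z₂} (hi₂ : K.cofib i₂)
    {σ₁ : Z₁ ⟶ W} (hσ₁ : K.weq σ₁) {σ₂ : Z₂ ⟶ W} (hσ₂ : K.weq σ₂)
    (hc : i₁ ≫ σ₁ = i₂ ≫ σ₂)
    {a₁ : X ⟶ Q₁} {b₁ : Z₁ ⟶ Q₁} (hQ₁ : IsPushout g i₁ a₁ b₁)
    {a₂ : X ⟶ Q₂} {b₂ : Z₂ ⟶ Q₂} (hQ₂ : IsPushout g i₂ a₂ b₂)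
    {x : X ⟶ B₀} {z : W ⟶ B₀}
    {u₁ : Q₁ ⟶ B₀} (ha₁ : a₁ ≫ u₁ = x) (hb₁ : b₁ ≫ u₁ = σ₁ ≫ z)
    {u₂ : Q₂ ⟶ B₀} (ha₂ : a₂ ≫ u₂ = x) (hb₂ : b₂ ≫ u₂ = σ₂ ≫ z) :
    Rz K (⟨Q₁, u₁⟩ : Σ X : 𝒟, X ⟶ B₀) ⟨Q₂, u₂⟩ := by
  obtain ⟨P, m₁, m₂, hP, hm₂⟩ := K.po_exists i₁ i₂ hi₁
  have hm₁ : K.cofib m₁ := K.cofib_inl_of_isPushout hi₂ hP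
  set vW : P ⟶ W := hP.desc σ₁ σ₂ hc with hvW
  have hm₁v : m₁ ≫ vW = σ₁ := hP.inl_desc _ _ _
  have hm₂v : m₂ ≫ vW = σ₂ := hP.inr_desc _ _ _
  obtain ⟨M, iP, σP, hiP, hσP, hfac⟩ := K.C_fac vW
  have ht₁c : K.cofib (m₁ ≫ iP) := K.cofib_comp hm₁ hiP
  have ht₂c : K.cofib (m₂ ≫ iP) := K.cofib_comp hm₂ hiP
  have ht₁σ : (m₁ ≫ iP) ≫ σP = σ₁ := by rw [Category.assoc, hfac, hm₁v]
  have ht₂σ : (m₂ ≫ iP) ≫ σP = σ₂ := by rw [Category.assoc, hfac, hm₂v]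
  have ht₁w : K.weq (m₁ ≫ iP) := K.weq_of_comp_left hσP (by rw [ht₁σ]; exact hσ₁)
  have ht₂w : K.weq (m₂ ≫ iP) := K.weq_of_comp_left hσP (by rw [ht₂σ]; exact hσ₂)
  have hiM : i₂ ≫ m₂ ≫ iP = i₁ ≫ m₁ ≫ iP := by
    rw [← Category.assoc, ← Category.assoc, hP.w]
  obtain ⟨QM, bM, aM, hQM0, _⟩ := K.po_exists (i₁ ≫ m₁ ≫ iP) g
    (K.cofib_comp hi₁ ht₁c)
  have hQM : IsPushout g (i₁ ≫ m₁ ≫ iP) aM bM := hQM0.flip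
  have hdw : g ≫ x = (i₁ ≫ m₁ ≫ iP) ≫ σP ≫ z := by
    calc g ≫ x = g ≫ a₁ ≫ u₁ := by rw [ha₁]
      _ = i₁ ≫ b₁ ≫ u₁ := by rw [← Category.assoc, hQ₁.w, Category.assoc]
      _ = i₁ ≫ σ₁ ≫ z := by rw [hb₁]
      _ = i₁ ≫ ((m₁ ≫ iP) ≫ σP) ≫ z := by rw [ht₁σ]
      _ = (i₁ ≫ m₁ ≫ iP) ≫ σP ≫ z := by simp only [Category.assoc]
  set uM : QM ⟶ B₀ := hQM.desc x (σP ≫ z) hdw with huM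
  have haM : aM ≫ uM = x := hQM.inl_desc _ _ _
  have hbM : bM ≫ uM = σP ≫ z := hQM.inr_desc _ _ _
  have step1 : Rs K (⟨Q₁, u₁⟩ : Σ X : 𝒟, X ⟶ B₀) ⟨QM, uM⟩ :=
    chiStep K ht₁c ht₁w hQ₁ hQM ha₁
      (by rw [hb₁, ← ht₁σ, Category.assoc]) haM hbM
  have hQM₂ : IsPushout g (i₂ ≫ m₂ ≫ iP) aM bM := by rw [hiM]; exact hQM
  have step2 : Rs K (⟨Q₂, u₂⟩ : Σ X : 𝒟, X ⟶ B₀) ⟨QM, uM⟩ :=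
    chiStep K ht₂c ht₂w hQ₂ hQM₂ ha₂
      (by rw [hb₂, ← ht₂σ, Category.assoc]) haM hbM
  exact Relation.EqvGen.trans _ _ _ (Relation.EqvGen.rel _ _ step1)
    (Relation.EqvGen.symm _ _ (Relation.EqvGen.rel _ _ step2))

end AuxGluing
section AuxGluing2

variable {𝒟 : Type*} [Category 𝒟] [HasZeroObject 𝒟] [HasZeroMorphisms 𝒟]
variable (K : PreJCat 𝒟)

/-- Gluing lemma: pushouts of weakly equivalent spans (over a common cylinder object)
are zigzag-equivalent over the base. -/
lemma lemG {B₀ N N' X Z₁ Z₂ W Q₁ Q₂ : 𝒟}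
    {α : N ⟶ N'} (hα : K.weq α) {g' : N' ⟶ X}
    {i₁ : N ⟶ Z₁} (hi₁ : K.cofib i₁) {i₂ : N' ⟶ Z₂} (hi₂ : K.cofib i₂)
    {σ₁ : Z₁ ⟶ W} (hσ₁ : K.weq σ₁) {σ₂ : Z₂ ⟶ W} (hσ₂ : K.weq σ₂)
    (hcomp : i₁ ≫ σ₁ = α ≫ i₂ ≫ σ₂)
    {a₁ : X ⟶ Q₁} {b₁ : Z₁ ⟶ Q₁} (hQ₁ : IsPushout (α ≫ g') i₁ a₁ b₁)
    {a₂ : X ⟶ Q₂} {b₂ : Z₂ ⟶ Q₂} (hQ₂ : IsPushout g' i₂ a₂ b₂)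
    {x : X ⟶ B₀} {z : W ⟶ B₀}
    {u₁ : Q₁ ⟶ B₀} (ha₁ : a₁ ≫ u₁ = x) (hb₁ : b₁ ≫ u₁ = σ₁ ≫ z)
    {u₂ : Q₂ ⟶ B₀} (ha₂ : a₂ ≫ u₂ = x) (hb₂ : b₂ ≫ u₂ = σ₂ ≫ z) :
    Rz K (⟨Q₁, u₁⟩ : Σ X : 𝒟, X ⟶ B₀) ⟨Q₂, u₂⟩ := by
  obtain ⟨Wq, k₁, k₂, hWq, hk₂c⟩ := K.po_exists i₁ α hi₁
  have hk₁w : K.weq k₁ := (K.po_weq hi₁ hWq).1 hα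
  -- the map from the intermediate pushout to Q₁
  have hcw : i₁ ≫ b₁ = α ≫ g' ≫ a₁ := by
    rw [← hQ₁.w, Category.assoc]
  set c : Wq ⟶ Q₁ := hWq.desc b₁ (g' ≫ a₁) hcw with hc
  have hk₁c : k₁ ≫ c = b₁ := hWq.inl_desc _ _ _
  have hk₂c' : k₂ ≫ c = g' ≫ a₁ := hWq.inr_desc _ _ _
  -- Q₁ is a pushout over N'
  have hbig : IsPushout i₁ (α ≫ g') (k₁ ≫ c) a₁ := by rw [hk₁c]; exact hQ₁.flip
  have hP₁ : IsPushout g' k₂ a₁ c := (IsPushout.of_top hbig hk₂c' hWq).flip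
  -- the cylinder map from Wq to W
  have hcomp' : i₁ ≫ σ₁ = α ≫ (i₂ ≫ σ₂) := hcomp
  set σW : Wq ⟶ W := hWq.desc σ₁ (i₂ ≫ σ₂) hcomp' with hσW
  have hk₁σ : k₁ ≫ σW = σ₁ := hWq.inl_desc _ _ _
  have hk₂σ : k₂ ≫ σW = i₂ ≫ σ₂ := hWq.inr_desc _ _ _
  have hσWw : K.weq σW := K.weq_of_comp_right hk₁w (by rw [hk₁σ]; exact hσ₁)
  -- base compatibility for c
  have hcu : c ≫ u₁ = σW ≫ z := by
    apply hWq.hom_ext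
    · rw [← Category.assoc, hk₁c, hb₁, ← Category.assoc, hk₁σ]
    · rw [← Category.assoc, hk₂c', ← Category.assoc, hk₂σ, Category.assoc, ha₁,
        Category.assoc, ← hb₂, ← Category.assoc, ← hQ₂.w, Category.assoc, ha₂]
  -- now apply the core gluing
  exact coreG K hk₂c hi₂ hσWw hσ₂ hk₂σ hP₁ hQ₂ ha₁ hcu ha₂ hb₂

/-- Changing the target corner of a pushout along a weak equivalence. -/
lemma xChange {B₀ N X X' Z Q : 𝒟} {g : N ⟶ X} {i : N ⟶ Z} (hi : K.cofib i)
    {e : X ⟶ X'} (he : K.weq e) {a : X ⟶ Q} {b : Z ⟶ Q} (hQ : IsPushout g i a b)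
    {x' : X' ⟶ B₀} {z : Z ⟶ B₀} {u : Q ⟶ B₀} (hau : a ≫ u = e ≫ x') (hbu : b ≫ u = z) :
    ∃ (Qβ : 𝒟) (aβ : X' ⟶ Qβ) (bβ : Z ⟶ Qβ) (uβ : Qβ ⟶ B₀),
      IsPushout (g ≫ e) i aβ bβ ∧ aβ ≫ uβ = x' ∧ bβ ≫ uβ = z ∧
        Rz K (⟨Q, u⟩ : Σ X : 𝒟, X ⟶ B₀) ⟨Qβ, uβ⟩ := by
  have ha : K.cofib a := K.cofib_inl_of_isPushout hi hQ
  obtain ⟨Qβ, l₂, r₂, hsq, _⟩ := K.po_exists a e ha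
  have hl₂w : K.weq l₂ := (K.po_weq ha hsq).1 he
  have hbigPO : IsPushout (g ≫ e) i r₂ (b ≫ l₂) := hQ.paste_horiz hsq.flip
  have hw : (g ≫ e) ≫ x' = i ≫ z := by
    rw [Category.assoc, ← hau, ← Category.assoc, hQ.w, Category.assoc, hbu]
  set uβ : Qβ ⟶ B₀ := hbigPO.desc x' z hw with huβ
  have h1 : r₂ ≫ uβ = x' := hbigPO.inl_desc _ _ _
  have h2 : (b ≫ l₂) ≫ uβ = z := hbigPO.inr_desc _ _ _
  refine ⟨Qβ, r₂, b ≫ l₂, uβ, hbigPO, h1, h2, Relation.EqvGen.rel _ _ ⟨l₂, hl₂w, ?_⟩⟩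
  apply hQ.hom_ext
  · rw [← Category.assoc, hsq.w, Category.assoc, h1, hau]
  · rw [← Category.assoc, h2, hbu]
section AuxSections

variable {𝒟 : Type*} [Category 𝒟] [HasZeroObject 𝒟] [HasZeroMorphisms 𝒟]
variable (K : PreJCat 𝒟)

/-- Weak sections transfer backwards along a weak equivalence over the base. -/
lemma hws_back (hd : ∀ X : 𝒟, K.CofModel X) {B₀ U V : 𝒟} {u : U ⟶ B₀} {v : V ⟶ B₀}
    {e : U ⟶ V} (he : K.weq e) (hev : e ≫ v = u)
    (hv : K.HasWeakSection v) : K.HasWeakSection u := by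
  obtain ⟨Eh, τ, q, hτ, hq, hfac, s, hs⟩ := hv
  obtain ⟨E₂, τ₂, q₂, hτ₂, hq₂, hfac₂⟩ := K.F_fac (e ≫ τ)
  have hq₂w : K.weq q₂ := K.weq_of_comp_right hτ₂ (by rw [hfac₂]; exact K.weq_comp he hτ)
  obtain ⟨σ₂, hσ₂⟩ := hd Eh q₂ hq₂ hq₂w
  refine ⟨E₂, τ₂, q₂ ≫ q, hτ₂, K.fib_comp hq₂ hq, ?_, s ≫ σ₂, ?_⟩
  · rw [← Category.assoc, hfac₂, Category.assoc, hfac, hev]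
  · rw [Category.assoc, ← Category.assoc σ₂, hσ₂, Category.id_comp, hs]

/-- Weak sections transfer forwards along a weak equivalence over the base. -/
lemma hws_fwd (hd : ∀ X : 𝒟, K.CofModel X) {B₀ U V : 𝒟} {u : U ⟶ B₀} {v : V ⟶ B₀}
    {e : U ⟶ V} (he : K.weq e) (hev : e ≫ v = u)
    (hu : K.HasWeakSection u) : K.HasWeakSection v := by
  obtain ⟨Ehu, τ, qf, hτ, hq, hτq, s, hs⟩ := hu
  obtain ⟨E', τ', q', hτ', hq', hfac'⟩ := K.F_fac v
  obtain ⟨P, fb, pbE, hPb, hfibE⟩ := K.pb_exists q' qf hq'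
  have hlw : (e ≫ τ') ≫ q' = τ ≫ qf := by rw [Category.assoc, hfac', hτq, hev]
  set ξ : U ⟶ P := hPb.lift (e ≫ τ') τ hlw with hξ
  have hξ₁ : ξ ≫ fb = e ≫ τ' := hPb.lift_fst _ _ _
  have hξ₂ : ξ ≫ pbE = τ := hPb.lift_snd _ _ _
  obtain ⟨P₁, τ₁, q₁, hτ₁, hq₁, hfac₁⟩ := K.F_fac ξ
  have hfibc : K.fib (q₁ ≫ pbE) := K.fib_comp hq₁ hfibE
  have hweqc : K.weq (q₁ ≫ pbE) := K.weq_of_comp_right hτ₁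
    (by rw [← Category.assoc, hfac₁, hξ₂]; exact hτ)
  obtain ⟨σs, hσs⟩ := hd Ehu (q₁ ≫ pbE) hfibc hweqc
  refine ⟨E', τ', q', hτ', hq', hfac', s ≫ σs ≫ q₁ ≫ fb, ?_⟩
  have : fb ≫ q' = pbE ≫ qf := hPb.w
  rw [Category.assoc, Category.assoc, Category.assoc, this, ← Category.assoc q₁,
    ← Category.assoc σs, hσs, Category.id_comp, hs]

/-- Weak sections are invariant under zigzags of weak equivalences over the base. -/
lemma hws_rz (hd : ∀ X : 𝒟, K.CofModel X) {B₀ : 𝒟} {u v : Σ X : 𝒟, X ⟶ B₀}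
    (h : Rz K u v) : K.HasWeakSection u.2 ↔ K.HasWeakSection v.2 := by
  induction h with
  | rel x y hxy =>
      obtain ⟨e, he, hev⟩ := hxy
      exact ⟨hws_fwd K hd he hev, hws_back K hd he hev⟩
  | refl => exact Iff.rfl
  | symm _ _ _ ih => exact ih.symm
  | trans _ _ _ _ _ ih₁ ih₂ => exact ih₁.trans ih₂

end AuxSections
section AuxJoin

variable {𝒟 : Type*} [Category 𝒟] [HasZeroObject 𝒟] [HasZeroMorphisms 𝒟]
variable (K : PreJCat 𝒟)

/-- Two joins along weakly equivalent bases (sharing the F-factorization) are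
zigzag-equivalent over the base. -/
lemma joinCore {B₀ A A' Eh P P' Z Z' Jf J' : 𝒟}
    {q : Eh ⟶ B₀} (hq : K.fib q)
    {e : A ⟶ A'} (he : K.weq e) {f : A ⟶ B₀} {f' : A' ⟶ B₀} (hef : e ≫ f' = f)
    {fb : P ⟶ Eh} {pb : P ⟶ A} (hP : IsPullback fb pb q f)
    {fb' : P' ⟶ Eh} {pb' : P' ⟶ A'} (hP' : IsPullback fb' pb' q f')
    {i : P ⟶ Z} (hi : K.cofib i) {σ : Z ⟶ Eh} (hσ : K.weq σ) (hiσ : i ≫ σ = fb)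
    {i' : P' ⟶ Z'} (hi' : K.cofib i') {σ' : Z' ⟶ Eh} (hσ' : K.weq σ') (hiσ' : i' ≫ σ' = fb')
    {a : A ⟶ Jf} {b : Z ⟶ Jf} (hJ : IsPushout pb i a b)
    {a' : A' ⟶ J'} {b' : Z' ⟶ J'} (hJ' : IsPushout pb' i' a' b')
    {j : Jf ⟶ B₀} (haj : a ≫ j = f) (hbj : b ≫ j = σ ≫ q)
    {j' : J' ⟶ B₀} (haj' : a' ≫ j' = f') (hbj' : b' ≫ j' = σ' ≫ q) :
    Rz K (⟨Jf, j⟩ : Σ X : 𝒟, X ⟶ B₀) ⟨J', j'⟩ := by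
  -- comparison map between the pullbacks
  have hlw : fb ≫ q = (pb ≫ e) ≫ f' := by rw [Category.assoc, hef, hP.w]
  set wP : P ⟶ P' := hP'.lift fb (pb ≫ e) hlw with hwP
  have hw₁ : wP ≫ fb' = fb := hP'.lift_fst _ _ _
  have hw₂ : wP ≫ pb' = pb ≫ e := hP'.lift_snd _ _ _
  have hleft : IsPullback wP pb pb' e := by
    apply IsPullback.of_right _ hw₂ hP'
    rw [hw₁, hef]
    exact hP
  have hfib' : K.fib pb' := K.fib_of_isPullback hq hP'
  have hwPw : K.weq wP := (K.pb_weq hfib' hleft).1 he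
  -- change the target corner of the first pushout
  obtain ⟨Qβ, aβ, bβ, uβ, hQβ, haβ, hbβ, hRz₁⟩ :=
    xChange K hi he hJ (x' := f') (by rw [haj, hef]) hbj
  -- compare the two pushouts over P'
  have hQβ' : IsPushout (wP ≫ pb') i aβ bβ := by rw [hw₂]; exact hQβ
  have hcomp : i ≫ σ = wP ≫ i' ≫ σ' := by rw [hiσ, hiσ', hw₁]
  have hRz₂ : Rz K (⟨Qβ, uβ⟩ : Σ X : 𝒟, X ⟶ B₀) ⟨J', j'⟩ :=
    lemG K hwPw hi hi' hσ hσ' hcomp hQβ' hJ' haβ hbβ haj' hbj'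
  exact Relation.EqvGen.trans _ _ _ hRz₁ hRz₂

/-- Transfer of joins along a weak equivalence of first arguments, forward direction. -/
lemma joinTransfer {B₀ A A' E₀ : 𝒟} {f : A ⟶ B₀} {f' : A' ⟶ B₀} {g₀ : E₀ ⟶ B₀}
    {e : A ⟶ A'} (he : K.weq e) (hef : e ≫ f' = f)
    {Jf : 𝒟} {j : Jf ⟶ B₀} (hj : K.IsJoin f g₀ j) :
    ∃ (J' : 𝒟) (j' : J' ⟶ B₀), K.IsJoin f' g₀ j' ∧
      Rz K (⟨Jf, j⟩ : Σ X : 𝒟, X ⟶ B₀) ⟨J', j'⟩ := by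
  obtain ⟨Eh, τ, q, hτ, hq, hτq, P, Z, fb, pb, i, σ, a, bz, hP, hi, hσ, hiσ, hJ, haj, hbj⟩ := hj
  obtain ⟨P', fb', pb', hP', hfib'⟩ := K.pb_exists q f' hq
  obtain ⟨Z', i', σ', hi', hσ', hiσ'⟩ := K.C_fac fb'
  obtain ⟨J', bl, br, hJ'0, _⟩ := K.po_exists i' pb' hi'
  have hJ' : IsPushout pb' i' br bl := hJ'0.flip
  have hwd : pb' ≫ f' = i' ≫ σ' ≫ q := by rw [← hP'.w, ← hiσ', Category.assoc]
  set j' : J' ⟶ B₀ := hJ'.desc f' (σ' ≫ q) hwd with hj'def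
  have haj' : br ≫ j' = f' := hJ'.inl_desc _ _ _
  have hbj' : bl ≫ j' = σ' ≫ q := hJ'.inr_desc _ _ _
  refine ⟨J', j', ⟨Eh, τ, q, hτ, hq, hτq, P', Z', fb', pb', i', σ', br, bl,
    hP', hi', hσ', hiσ', hJ', haj', hbj'⟩, ?_⟩
  exact joinCore K hq he hef hP hP' hi hσ hiσ hi' hσ' hiσ' hJ hJ' haj hbj haj' hbj'

/-- Transfer of joins along a weak equivalence of first arguments, backward direction. -/
lemma joinTransfer' {B₀ A A' E₀ : 𝒟} {f : A ⟶ B₀} {f' : A' ⟶ B₀} {g₀ : E₀ ⟶ B₀}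
    {e : A ⟶ A'} (he : K.weq e) (hef : e ≫ f' = f)
    {J' : 𝒟} {j' : J' ⟶ B₀} (hj' : K.IsJoin f' g₀ j') :
    ∃ (Jf : 𝒟) (j : Jf ⟶ B₀), K.IsJoin f g₀ j ∧
      Rz K (⟨Jf, j⟩ : Σ X : 𝒟, X ⟶ B₀) ⟨J', j'⟩ := by
  obtain ⟨Eh, τ, q, hτ, hq, hτq, P', Z', fb', pb', i', σ', a', b', hP', hi', hσ', hiσ',
    hJ', haj', hbj'⟩ := hj'
  obtain ⟨P, fb, pb, hP, hfib⟩ := K.pb_exists q f hq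
  obtain ⟨Z, i, σ, hi, hσ, hiσ⟩ := K.C_fac fb
  obtain ⟨Jf, bl, br, hJ0, _⟩ := K.po_exists i pb hi
  have hJ : IsPushout pb i br bl := hJ0.flip
  have hwd : pb ≫ f = i ≫ σ ≫ q := by rw [← hP.w, ← hiσ, Category.assoc]
  set j : Jf ⟶ B₀ := hJ.desc f (σ ≫ q) hwd with hjdef
  have haj : br ≫ j = f := hJ.inl_desc _ _ _
  have hbj : bl ≫ j = σ ≫ q := hJ.inr_desc _ _ _
  refine ⟨Jf, j, ⟨Eh, τ, q, hτ, hq, hτq, P, Z, fb, pb, i, σ, br, bl,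
    hP, hi, hσ, hiσ, hJ, haj, hbj⟩, ?_⟩
  exact joinCore K hq he hef hP hP' hi hσ hiσ hi' hσ' hiσ' hJ hJ' haj hbj haj' hbj'

/-- Joins of zigzag-equivalent morphisms are zigzag-equivalent. -/
lemma rzJoin {B₀ E₀ : 𝒟} {g₀ : E₀ ⟶ B₀} {u v : Σ X : 𝒟, X ⟶ B₀} (h : Rz K u v) :
    (∀ {Jf : 𝒟} {j : Jf ⟶ B₀}, K.IsJoin u.2 g₀ j →
      ∃ (J' : 𝒟) (j' : J' ⟶ B₀), K.IsJoin v.2 g₀ j' ∧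
        Rz K (⟨Jf, j⟩ : Σ X : 𝒟, X ⟶ B₀) ⟨J', j'⟩) ∧
    (∀ {J' : 𝒟} {j' : J' ⟶ B₀}, K.IsJoin v.2 g₀ j' →
      ∃ (Jf : 𝒟) (j : Jf ⟶ B₀), K.IsJoin u.2 g₀ j ∧
        Rz K (⟨Jf, j⟩ : Σ X : 𝒟, X ⟶ B₀) ⟨J', j'⟩) := by
  induction h with
  | rel x y hxy =>
      obtain ⟨e, he, hev⟩ := hxy
      exact ⟨fun hj => joinTransfer K he hev hj, fun hj' => joinTransfer' K he hev hj'⟩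
  | refl x =>
      exact ⟨fun hj => ⟨_, _, hj, Relation.EqvGen.refl _⟩,
        fun hj' => ⟨_, _, hj', Relation.EqvGen.refl _⟩⟩
  | symm x y _ ih =>
      refine ⟨fun hj => ?_, fun hj' => ?_⟩
      · obtain ⟨J', j', h₁, h₂⟩ := ih.2 hj
        exact ⟨J', j', h₁, Relation.EqvGen.symm _ _ h₂⟩
      · obtain ⟨Jf, j, h₁, h₂⟩ := ih.1 hj'
        exact ⟨Jf, j, h₁, Relation.EqvGen.symm _ _ h₂⟩
  | trans x y z _ _ ih₁ ih₂ =>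
      refine ⟨fun hj => ?_, fun hj' => ?_⟩
      · obtain ⟨J₁, j₁, h₁, h₂⟩ := ih₁.1 hj
        obtain ⟨J₂, j₂, h₃, h₄⟩ := ih₂.1 h₁
        exact ⟨J₂, j₂, h₃, Relation.EqvGen.trans _ _ _ h₂ h₄⟩
      · obtain ⟨J₁, j₁, h₁, h₂⟩ := ih₂.2 hj'
        obtain ⟨J₂, j₂, h₃, h₄⟩ := ih₁.2 h₁
        exact ⟨J₂, j₂, h₃, Relation.EqvGen.trans _ _ _ h₄ h₂⟩
end AuxJoin
section AuxMu

variable {C₀ : Type u} [Category.{v} C₀] [HasZeroObject C₀] [HasZeroMorphisms C₀]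
variable {𝒟 : Type u'} [Category.{v'} 𝒟] [HasZeroObject 𝒟] [HasZeroMorphisms 𝒟]
variable (J : PreJCat C₀) (K : PreJCat 𝒟)

/-- A modelization functor sends weak sections to weak sections. -/
lemma hws_mu (μ : ModelizationFunctor J K) {E B : C₀} {g : E ⟶ B}
    (h : J.HasWeakSection g) : K.HasWeakSection (μ.F.map g) := by
  obtain ⟨Eh, τ, q, hτ, hq, hτq, s, hs⟩ := h
  obtain ⟨V, τ₂, q₂, hτ₂, hq₂, hfac₂⟩ := K.F_fac (μ.F.map q)
  refine ⟨V, μ.F.map τ ≫ τ₂, q₂, K.weq_comp (μ.map_weq τ hτ) hτ₂, hq₂, ?_, μ.F.map s ≫ τ₂, ?_⟩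
  · rw [Category.assoc, hfac₂, ← μ.F.map_comp, hτq]
  · rw [Category.assoc, hfac₂, ← μ.F.map_comp, hs, μ.F.map_id]

/-- A modelization functor sends joins to joins, up to zigzag over the base. -/
lemma muJoin (μ : ModelizationFunctor J K) {A E B J₁ : C₀} {h : A ⟶ B} {p : E ⟶ B}
    {j : J₁ ⟶ B} (hj : J.IsJoin h p j) :
    ∃ (J₅ : 𝒟) (j₅ : J₅ ⟶ μ.F.obj B), K.IsJoin (μ.F.map h) (μ.F.map p) j₅ ∧
      Rz K (⟨μ.F.obj J₁, μ.F.map j⟩ : Σ X : 𝒟, X ⟶ μ.F.obj B) ⟨J₅, j₅⟩ := by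
  obtain ⟨Eh, τ, q, hτ, hq, hτq, E', Z, fbar, pbar, i, σ, a, bz, hPB, hi, hσ, hiσ,
    hPO, haj, hbj⟩ := hj
  -- the pullback square is a homotopy pullback
  have hhpb : J.IsHPB fbar pbar q h :=
    ⟨hPB.w, Eh, 𝟙 Eh, q, J.weq_id Eh, hq, Category.id_comp q, E', fbar, pbar, hPB,
      𝟙 E', J.weq_id E', by simp, Category.id_comp pbar⟩
  -- the pushout square is a homotopy pushout
  have hhpo : J.IsHPO i pbar bz a :=
    ⟨hPO.w.symm, Z, i, 𝟙 Z, hi, J.weq_id Z, Category.comp_id i, J₁, bz, a, hPO.flip,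
      𝟙 J₁, J.weq_id J₁, by simp, Category.comp_id a⟩
  obtain ⟨-, E₃, τ₃, q₃, hτ₃, hq₃, hτ₃q₃, Pt, pr1, pr2, hPt, w, hww, hw1, hw2⟩ :=
    μ.map_hpb hhpb
  obtain ⟨-, Z₄, i₄, σ₄, hi₄, hσ₄, hiσ₄, Q, inl₄, inr₄, hQ, w', hw'w, hwl, hwr⟩ :=
    μ.map_hpo hhpo
  -- construct a genuine join of (μ h) and (μ p) in the target category
  obtain ⟨Z₅, i₅, σ₅, hi₅, hσ₅, hiσ₅⟩ := K.C_fac pr1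
  obtain ⟨J₅, b₅, a₅, hJ₅0, _⟩ := K.po_exists i₅ pr2 hi₅
  have hJ₅ : IsPushout pr2 i₅ a₅ b₅ := hJ₅0.flip
  have hwd : pr2 ≫ μ.F.map h = i₅ ≫ σ₅ ≫ q₃ := by
    rw [← hPt.w, ← hiσ₅, Category.assoc]
  set j₅ : J₅ ⟶ μ.F.obj B := hJ₅.desc (μ.F.map h) (σ₅ ≫ q₃) hwd with hj₅def
  have haj₅ : a₅ ≫ j₅ = μ.F.map h := hJ₅.inl_desc _ _ _
  have hbj₅ : b₅ ≫ j₅ = σ₅ ≫ q₃ := hJ₅.inr_desc _ _ _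
  have hjoin : K.IsJoin (μ.F.map h) (μ.F.map p) j₅ :=
    ⟨E₃, μ.F.map τ ≫ τ₃, q₃, K.weq_comp (μ.map_weq τ hτ) hτ₃, hq₃,
      (by rw [Category.assoc, hτ₃q₃, ← μ.F.map_comp, hτq]), Pt, Z₅, pr1, pr2, i₅, σ₅,
      a₅, b₅, hPt, hi₅, hσ₅, hiσ₅, hJ₅, haj₅, hbj₅⟩
  refine ⟨J₅, j₅, hjoin, ?_⟩
  -- first step of the zigzag: from μ J₁ back to the strict pushout Q
  have step0 : Rs K (⟨Q, w' ≫ μ.F.map j⟩ : Σ X : 𝒟, X ⟶ μ.F.obj B)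
      ⟨μ.F.obj J₁, μ.F.map j⟩ := ⟨w', hw'w, rfl⟩
  -- gluing between Q and J₅
  have hσ₁w : K.weq (σ₄ ≫ μ.F.map σ ≫ τ₃) :=
    K.weq_comp hσ₄ (K.weq_comp (μ.map_weq σ hσ) hτ₃)
  have hcomp : i₄ ≫ σ₄ ≫ μ.F.map σ ≫ τ₃ = w ≫ i₅ ≫ σ₅ := by
    calc i₄ ≫ σ₄ ≫ μ.F.map σ ≫ τ₃ = ((i₄ ≫ σ₄) ≫ μ.F.map σ) ≫ τ₃ := by
          simp only [Category.assoc]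
      _ = (μ.F.map i ≫ μ.F.map σ) ≫ τ₃ := by rw [hiσ₄]
      _ = μ.F.map fbar ≫ τ₃ := by rw [← μ.F.map_comp, hiσ]
      _ = w ≫ pr1 := hw1.symm
      _ = w ≫ i₅ ≫ σ₅ := by rw [← hiσ₅]
  have hQ₁ : IsPushout (w ≫ pr2) i₄ inr₄ inl₄ := by rw [hw2]; exact hQ.flip
  have hu₁a : inr₄ ≫ w' ≫ μ.F.map j = μ.F.map h := by
    rw [← Category.assoc, hwr, ← μ.F.map_comp, haj]
  have hu₁b : inl₄ ≫ w' ≫ μ.F.map j = (σ₄ ≫ μ.F.map σ ≫ τ₃) ≫ q₃ := by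
    rw [← Category.assoc, hwl, Category.assoc, ← μ.F.map_comp, hbj, μ.F.map_comp,
      ← hτ₃q₃]
    simp only [Category.assoc]
  have stepG : Rz K (⟨Q, w' ≫ μ.F.map j⟩ : Σ X : 𝒟, X ⟶ μ.F.obj B) ⟨J₅, j₅⟩ :=
    lemG K hww hi₄ hi₅ hσ₁w hσ₅ hcomp hQ₁ hJ₅ hu₁a hu₁b haj₅ hbj₅
  exact Relation.EqvGen.trans _ _ _
    (Relation.EqvGen.symm _ _ (Relation.EqvGen.rel _ _ step0)) stepG

/-- Main induction: iterated joins are preserved by modelization functors up to zigzag. -/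
lemma mainIter (μ : ModelizationFunctor J K) {E B : C₀} (p : E ⟶ B) :
    ∀ {n : ℕ} {X : C₀} {h : X ⟶ B}, J.IsIterJoin p n h →
      ∃ (Y : 𝒟) (g : Y ⟶ μ.F.obj B), K.IsIterJoin (μ.F.map p) n g ∧
        Rz K (⟨μ.F.obj X, μ.F.map h⟩ : Σ X : 𝒟, X ⟶ μ.F.obj B) ⟨Y, g⟩ := by
  intro n X h hiter
  induction hiter with
  | zero => exact ⟨μ.F.obj E, μ.F.map p, PreJCat.IsIterJoin.zero, Relation.EqvGen.refl _⟩
  | @succ n X Y h h' hprev hjoin ih =>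
      obtain ⟨Y₀, g, hg, hR⟩ := ih
      obtain ⟨J₅, j₅, hj₅, hR₅⟩ := muJoin J K μ hjoin
      obtain ⟨J₆, j₆, hj₆, hR₆⟩ := (rzJoin K hR).1 hj₅
      exact ⟨J₆, j₆, PreJCat.IsIterJoin.succ hg hj₆,
        Relation.EqvGen.trans _ _ _ hR₅ hR₆⟩

end AuxMu
/-- For a modelization functor `μ` between J-categories,
`secat (μ p) ≤ secat p`. -/
theorem Gsecat_map_le {D : Type u'} [Category.{v'} D] [HasZeroObject D]
    [HasZeroMorphisms D]
    (J : JCat C) (K : JCat D)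
    (hc : ∀ X : C, J.toPreJCat.CofModel X)
    (hd : ∀ X : D, K.toPreJCat.CofModel X)
    (μ : ModelizationFunctor J.toPreJCat K.toPreJCat)
    {E B : C} (p : E ⟶ B) :
    K.toPreJCat.Gsecat (μ.F.map p) ≤ J.toPreJCat.Gsecat p := by
  apply sInf_le_sInf
  rintro n ⟨m, rfl, X, h, hiter, hws⟩
  obtain ⟨Y, g, hg, hR⟩ := mainIter J.toPreJCat K.toPreJCat μ p hiter
  exact ⟨m, rfl, Y, g, hg, (hws_rz K.toPreJCat hd hR).mp (hws_mu _ _ μ hws)⟩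
end AuxGluing2
end

section
/- Let μ : C → D and ν : D → C be modelization functors between J-categories, and let p : E → B be a morphism in C such that ν(μ(p)) is weakly equivalent to p. Then secat(μ(p)) = secat(p). -/
open CategoryTheory CategoryTheory.Limits ZeroObject

universe v u v' u'

variable (C : Type u) [Category.{v} C] [HasZeroObject C] [HasZeroMorphisms C]

variable {C}

variable (C)

variable {C}

section GsecatProofAux

universe v₁ u₁

namespace GsecatProof

set_option linter.unusedSectionVars false

open PreJCat

variable {C : Type u₁} [Category.{v₁} C] [HasZeroObject C] [HasZeroMorphisms C]
variable {P : PreJCat C}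

lemma weq_id (X : C) : P.weq (𝟙 X) := (P.iso_triv_fib _ (inferInstance : IsIso (𝟙 X))).2

lemma weq_sec {X Y : C} {s : X ⟶ Y} {t : Y ⟶ X} (h : s ≫ t = 𝟙 X) (ht : P.weq t) :
    P.weq s :=
  P.weq_of_comp_left ht (by rw [h]; exact weq_id X)

/-- In any pullback square over a cospan whose first leg is a fibration, the second
projection is a fibration. -/
lemma fib_of_pb {E B B' Pt : C} {q : E ⟶ B} {f : B' ⟶ B} {fb : Pt ⟶ E} {pb : Pt ⟶ B'}
    (hq : P.fib q) (h : IsPullback fb pb q f) : P.fib pb := by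
  obtain ⟨P₀, fb₀, pb₀, h₀, hfib⟩ := P.pb_exists q f hq
  let e : Pt ⟶ P₀ := h₀.lift fb pb h.w
  let e' : P₀ ⟶ Pt := h.lift fb₀ pb₀ h₀.w
  have hee' : e ≫ e' = 𝟙 Pt := h.hom_ext (by simp [e, e']) (by simp [e, e'])
  have he'e : e' ≫ e = 𝟙 P₀ := h₀.hom_ext (by simp [e, e']) (by simp [e, e'])
  have hiso : IsIso e := ⟨e', hee', he'e⟩
  have hpb : pb = e ≫ pb₀ := by simp [e]
  rw [hpb]
  exact P.fib_comp (P.iso_triv_fib e hiso).1 hfib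

/-- In any pushout square over a span whose first leg is a cofibration, the second
coprojection is a cofibration. -/
lemma cofib_of_po {A X Y Q : C} {i : A ⟶ X} {g : A ⟶ Y} {inl : X ⟶ Q} {inr : Y ⟶ Q}
    (hi : P.cofib i) (h : IsPushout i g inl inr) : P.cofib inr := by
  obtain ⟨Q₀, inl₀, inr₀, h₀, hcof⟩ := P.po_exists i g hi
  let e : Q₀ ⟶ Q := h₀.desc inl inr h.w
  let e' : Q ⟶ Q₀ := h.desc inl₀ inr₀ h₀.w
  have hee' : e ≫ e' = 𝟙 Q₀ := h₀.hom_ext (by simp [e, e']) (by simp [e, e'])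
  have he'e : e' ≫ e = 𝟙 Q := h.hom_ext (by simp [e, e']) (by simp [e, e'])
  have hiso : IsIso e := ⟨e', hee', he'e⟩
  have hinr : inr = inr₀ ≫ e := by simp [e]
  rw [hinr]
  exact P.cofib_comp hcof (P.iso_triv_cofib e hiso).1

/-- Morphisms into a fixed object `B`. -/
abbrev Ov (B : C) := Σ X : C, X ⟶ B

/-- A single weak equivalence between morphisms over `B`. -/
def stepB (P : PreJCat C) {B : C} (u v : Ov B) : Prop :=
  ∃ e : u.1 ⟶ v.1, P.weq e ∧ u.2 = e ≫ v.2

/-- Zigzags of weak equivalences between morphisms over `B`. -/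
def relB (P : PreJCat C) {B : C} : Ov B → Ov B → Prop :=
  Relation.EqvGen (stepB P)

lemma relB.trans' {B : C} {u v w : Ov B} (h₁ : relB P u v) (h₂ : relB P v w) :
    relB P u w := Relation.EqvGen.trans _ _ _ h₁ h₂

lemma relB.of_step {B : C} {X Y : C} {jx : X ⟶ B} {jy : Y ⟶ B} (e : X ⟶ Y)
    (he : P.weq e) (hcomp : jx = e ≫ jy) : relB P ⟨X, jx⟩ ⟨Y, jy⟩ :=
  Relation.EqvGen.rel _ _ ⟨e, he, hcomp⟩

/-- Weak sections transfer forwards along a weak equivalence of morphisms. -/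
lemma hws_fwd (hc : ∀ X : C, P.CofModel X) {X X' B B' : C} {h : X ⟶ B} {h' : X' ⟶ B'}
    {γ : X ⟶ X'} {β : B ⟶ B'} (hβ : P.weq β) (hsq : h ≫ β = γ ≫ h')
    (hw : P.HasWeakSection h) : P.HasWeakSection h' := by
  obtain ⟨E, τ, q, hτ, hq, hfac, s, hs⟩ := hw
  obtain ⟨E₁, ρ, q₁, hρ, hq₁, hfac₁⟩ := P.F_fac h'
  obtain ⟨W, w₁, wE, hW, hwE⟩ := P.pb_exists q₁ (q ≫ β) hq₁
  have hmw : (γ ≫ ρ) ≫ q₁ = τ ≫ (q ≫ β) := by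
    rw [Category.assoc, hfac₁, ← hsq, ← Category.assoc, hfac]
  let m : X ⟶ W := hW.lift (γ ≫ ρ) τ hmw
  obtain ⟨V, m₁, m₂, hm₁, hm₂, hmfac⟩ := P.F_fac m
  have hfibVE : P.fib (m₂ ≫ wE) := P.fib_comp hm₂ hwE
  have hweqVE : P.weq (m₂ ≫ wE) := P.weq_of_comp_right hm₁
    (by rw [← Category.assoc, hmfac]; simpa [m] using hτ)
  obtain ⟨s₂, hs₂⟩ := hc E (m₂ ≫ wE) hfibVE hweqVE
  let e : E ⟶ E₁ := s₂ ≫ m₂ ≫ w₁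
  have he : e ≫ q₁ = q ≫ β := by
    calc e ≫ q₁ = s₂ ≫ m₂ ≫ (w₁ ≫ q₁) := by simp [e, Category.assoc]
    _ = (s₂ ≫ (m₂ ≫ wE)) ≫ (q ≫ β) := by rw [hW.w]; simp [Category.assoc]
    _ = q ≫ β := by rw [hs₂, Category.id_comp]
  obtain ⟨V', n₁, n₂, hn₁, hn₂, hnfac⟩ := P.F_fac (s ≫ e)
  have hfibn : P.fib (n₂ ≫ q₁) := P.fib_comp hn₂ hq₁
  have hweqn : P.weq (n₂ ≫ q₁) := P.weq_of_comp_right hn₁ (by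
    rw [← Category.assoc, hnfac, Category.assoc, he, ← Category.assoc, hs, Category.id_comp]
    exact hβ)
  obtain ⟨s', hs'⟩ := hc B' (n₂ ≫ q₁) hfibn hweqn
  exact ⟨E₁, ρ, q₁, hρ, hq₁, hfac₁, s' ≫ n₂, by rw [Category.assoc]; exact hs'⟩

/-- Weak sections transfer backwards along a weak equivalence of morphisms. -/
lemma hws_bwd {X X' B B' : C} {h : X ⟶ B} {h' : X' ⟶ B'}
    {γ : X ⟶ X'} {β : B ⟶ B'} (hγ : P.weq γ) (hβ : P.weq β) (hsq : h ≫ β = γ ≫ h')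
    (hw : P.HasWeakSection h') : P.HasWeakSection h := by
  obtain ⟨E₁, ρ, q₁, hρ, hq₁, hfac, s₁, hs₁⟩ := hw
  obtain ⟨Q, π', π, hQ, hπ⟩ := P.pb_exists q₁ β hq₁
  have hπ' : P.weq π' := (P.pb_weq hq₁ hQ).1 hβ
  let t : B ⟶ Q := hQ.lift (β ≫ s₁) (𝟙 B) (by rw [Category.assoc, hs₁, Category.comp_id, Category.id_comp])
  let τ' : X ⟶ Q := hQ.lift (γ ≫ ρ) h (by rw [Category.assoc, hfac, ← hsq])
  have hτ' : P.weq τ' := P.weq_of_comp_left hπ'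
    (by rw [hQ.lift_fst]; exact P.weq_comp hγ hρ)
  exact ⟨Q, τ', π, hτ', hπ, hQ.lift_snd _ _ _, t, hQ.lift_snd _ _ _⟩

lemma hws_iff_of_relB (hc : ∀ X : C, P.CofModel X) {B : C} {u v : Ov B}
    (hrel : relB P u v) : P.HasWeakSection u.2 ↔ P.HasWeakSection v.2 := by
  induction hrel with
  | rel u v hst =>
    obtain ⟨e, he, heq⟩ := hst
    have hsq : u.2 ≫ 𝟙 B = e ≫ v.2 := by rw [Category.comp_id, heq]
    exact ⟨fun hw => hws_fwd hc (weq_id B) hsq hw, fun hw => hws_bwd he (weq_id B) hsq hw⟩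
  | refl u => exact Iff.rfl
  | symm u v _ ih => exact ih.symm
  | trans u v w _ _ ih₁ ih₂ => exact ih₁.trans ih₂


/-- Comparison of two fibrant replacements over `B` and of the induced pullbacks:
given two fibrations `q, qt` over `B` receiving weak equivalences from a common
source compatibly, and pullbacks of each along `f`, there are a weak equivalence
`w : E ⟶ Et` over `B` and a weak equivalence `u` between the pullbacks compatible
with `w`. -/
lemma fcomp (hc : ∀ X : C, P.CofModel X)
    {B Cc E Et A Pj Pt : C} {q : E ⟶ B} {qt : Et ⟶ B} (hq : P.fib q) (hqt : P.fib qt)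
    {τ : Cc ⟶ E} {c : Cc ⟶ Et} (hτ : P.weq τ) (hcw : P.weq c) (hfac : τ ≫ q = c ≫ qt)
    {f : A ⟶ B} {fb : Pj ⟶ E} {pb : Pj ⟶ A} (hPj : IsPullback fb pb q f)
    {f₂ : Pt ⟶ Et} {p₂ : Pt ⟶ A} (hPt : IsPullback f₂ p₂ qt f) :
    ∃ (w : E ⟶ Et) (u : Pj ⟶ Pt),
      P.weq w ∧ w ≫ qt = q ∧ P.weq u ∧ u ≫ p₂ = pb ∧ u ≫ f₂ = fb ≫ w := by
  obtain ⟨Z, z₁, z₂, hZ, hz₂⟩ := P.pb_exists qt q hqt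
  have hz₁ : P.fib z₁ := fib_of_pb hq hZ.flip
  let m : Cc ⟶ Z := hZ.lift c τ hfac.symm
  obtain ⟨V, m₁, m₂, hm₁, hm₂, hmfac⟩ := P.F_fac m
  have ht2fib : P.fib (m₂ ≫ z₂) := P.fib_comp hm₂ hz₂
  have ht2weq : P.weq (m₂ ≫ z₂) := P.weq_of_comp_right hm₁
    (by rw [← Category.assoc, hmfac]; simpa [m] using hτ)
  have ht1fib : P.fib (m₂ ≫ z₁) := P.fib_comp hm₂ hz₁
  have ht1weq : P.weq (m₂ ≫ z₁) := P.weq_of_comp_right hm₁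
    (by rw [← Category.assoc, hmfac]; simpa [m] using hcw)
  obtain ⟨s, hs⟩ := hc E (m₂ ≫ z₂) ht2fib ht2weq
  have hZw : (m₂ ≫ z₁) ≫ qt = (m₂ ≫ z₂) ≫ q := by
    rw [Category.assoc, Category.assoc, hZ.w]
  let w : E ⟶ Et := s ≫ (m₂ ≫ z₁)
  have hwqt : w ≫ qt = q := by
    calc w ≫ qt = s ≫ ((m₂ ≫ z₁) ≫ qt) := by simp [w, Category.assoc]
    _ = (s ≫ (m₂ ≫ z₂)) ≫ q := by rw [hZw]; simp [Category.assoc]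
    _ = q := by rw [hs, Category.id_comp]
  have hww : P.weq w := P.weq_comp (weq_sec hs ht2weq) ht1weq
  have hqVfib : P.fib ((m₂ ≫ z₂) ≫ q) := P.fib_comp ht2fib hq
  obtain ⟨Vb, v₁, v₂, hVb, hv₂⟩ := P.pb_exists ((m₂ ≫ z₂) ≫ q) f hqVfib
  -- θ : Vb ⟶ Pj
  let θ : Vb ⟶ Pj := hPj.lift (v₁ ≫ (m₂ ≫ z₂)) v₂
    (by simpa only [Category.assoc] using hVb.w)
  have hbig : IsPullback v₁ (θ ≫ pb) ((m₂ ≫ z₂) ≫ q) f := by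
    rw [hPj.lift_snd]; exact hVb
  have hθsq : IsPullback v₁ θ (m₂ ≫ z₂) fb :=
    hbig.of_bot (hPj.lift_fst _ _ _).symm hPj
  have hθw : P.weq θ := (P.pb_weq ht2fib hθsq).2 ht2weq
  -- θt : Vb ⟶ Pt
  let θt : Vb ⟶ Pt := hPt.lift (v₁ ≫ (m₂ ≫ z₁)) v₂
    (by simp only [Category.assoc]; rw [hZ.w]; simpa only [Category.assoc] using hVb.w)
  have hbig' : IsPullback v₁ (θt ≫ p₂) ((m₂ ≫ z₁) ≫ qt) f := by
    rw [hPt.lift_snd, hZw]; exact hVb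
  have hθtsq : IsPullback v₁ θt (m₂ ≫ z₁) f₂ :=
    hbig'.of_bot (hPt.lift_fst _ _ _).symm hPt
  have hθtw : P.weq θt := (P.pb_weq ht1fib hθtsq).2 ht1weq
  -- section of θ
  let sh : Pj ⟶ Vb := hVb.lift (fb ≫ s) pb (by
    rw [Category.assoc, ← Category.assoc s, hs, Category.id_comp, hPj.w])
  have hshθ : sh ≫ θ = 𝟙 Pj := hPj.hom_ext
    (by
      rw [Category.assoc, hPj.lift_fst, ← Category.assoc, hVb.lift_fst, Category.id_comp,
        Category.assoc, hs, Category.comp_id])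
    (by rw [Category.assoc, hPj.lift_snd, hVb.lift_snd, Category.id_comp])
  have hshw : P.weq sh := weq_sec hshθ hθw
  refine ⟨w, sh ≫ θt, hww, hwqt, P.weq_comp hshw hθtw, ?_, ?_⟩
  · rw [Category.assoc, hPt.lift_snd, hVb.lift_snd]
  · rw [Category.assoc, hPt.lift_fst, ← Category.assoc, hVb.lift_fst, Category.assoc]

/-- Transport of a pushout square along a weak equivalence of spans. -/
lemma push {Pp Z A J P'' A'' : C} {i : Pp ⟶ Z} {g : Pp ⟶ A} {bz : Z ⟶ J} {a : A ⟶ J}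
    (hi : P.cofib i) (hJ : IsPushout i g bz a)
    {u : Pp ⟶ P''} (hu : P.weq u) {γ : A ⟶ A''} (hγ : P.weq γ)
    {g'' : P'' ⟶ A''} (hcomm : u ≫ g'' = g ≫ γ) :
    ∃ (Z'' J'' : C) (i'' : P'' ⟶ Z'') (ζ : Z ⟶ Z'') (bz'' : Z'' ⟶ J'') (a'' : A'' ⟶ J'')
      (δ : J ⟶ J''),
      P.cofib i'' ∧ P.weq ζ ∧ IsPushout i u ζ i'' ∧ IsPushout i'' g'' bz'' a'' ∧
      P.weq δ ∧ bz ≫ δ = ζ ≫ bz'' ∧ a ≫ δ = γ ≫ a'' := by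
  obtain ⟨Z'', ζ, i'', h1, hci''⟩ := P.po_exists i u hi
  have hζ : P.weq ζ := (P.po_weq hi h1).1 hu
  obtain ⟨J'', bz'', a'', h2, _⟩ := P.po_exists i'' g'' hci''
  have hcompat : i ≫ (ζ ≫ bz'') = g ≫ (γ ≫ a'') := by
    rw [← Category.assoc, h1.w, Category.assoc, h2.w, ← Category.assoc, hcomm, Category.assoc]
  let δ : J ⟶ J'' := hJ.desc (ζ ≫ bz'') (γ ≫ a'') hcompat
  have hbzδ : bz ≫ δ = ζ ≫ bz'' := hJ.inl_desc _ _ _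
  have haδ : a ≫ δ = γ ≫ a'' := hJ.inr_desc _ _ _
  have hpaste : IsPushout i (u ≫ g'') (ζ ≫ bz'') a'' := h1.paste_vert h2
  rw [hcomm] at hpaste
  have hs : IsPushout i (g ≫ γ) (bz ≫ δ) a'' := by rw [hbzδ]; exact hpaste
  have hC : IsPushout a γ δ a'' := hs.of_top haδ hJ
  have hδ : P.weq δ := (P.po_weq (cofib_of_po hi hJ) hC).1 hγ
  exact ⟨Z'', J'', i'', ζ, bz'', a'', δ, hci'', hζ, h1, h2, hδ, hbzδ, haδ⟩

/-- A comparison of two pushouts along a trivial cofibration of the cofibred leg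
is a weak equivalence. -/
lemma push2 {Pp Z U A J JU : C} {i : Pp ⟶ Z} {k : Z ⟶ U} {g : Pp ⟶ A}
    {bz : Z ⟶ J} {a : A ⟶ J} {bzU : U ⟶ JU} {aU : A ⟶ JU} {δ : J ⟶ JU}
    (hk : P.cofib k) (hkw : P.weq k)
    (top : IsPushout i g bz a) (big : IsPushout (i ≫ k) g bzU aU)
    (h1 : bz ≫ δ = k ≫ bzU) (h2 : a ≫ δ = aU) : P.weq δ := by
  have hbig' : IsPushout (i ≫ k) g bzU (a ≫ δ) := by rw [h2]; exact big
  have hV : IsPushout k bz bzU δ := hbig'.of_left h1.symm top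
  exact (P.po_weq hk hV).2 hkw


/-- Forward transport of a join along a weak equivalence of pairs, towards a
prescribed fibrant replacement and pullback on the target side.  Returns the
constructed join with all witnesses exposed. -/
lemma step_core (hc : ∀ X : C, P.CofModel X)
    {A B A' B' Ep Ep' : C}
    {h : A ⟶ B} {h' : A' ⟶ B'} {g : Ep ⟶ B} {g' : Ep' ⟶ B'}
    {γ : A ⟶ A'} {β : B ⟶ B'}
    (hγ : P.weq γ) (hβ : P.weq β) (hsq : h ≫ β = γ ≫ h')
    {E₁ : C} {τ₁ : Ep' ⟶ E₁} {q₁ : E₁ ⟶ B'}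
    (hτ₁ : P.weq τ₁) (hq₁ : P.fib q₁) (hfac₁ : τ₁ ≫ q₁ = g')
    {P₁ : C} {f₁ : P₁ ⟶ E₁} {pb₁ : P₁ ⟶ A'} (hP₁ : IsPullback f₁ pb₁ q₁ h')
    {Et : C} {et : Et ⟶ E₁} {qt : Et ⟶ B} (hqt : P.fib qt) (hpbt : IsPullback et qt q₁ β)
    {c : Ep ⟶ Et} (hcw : P.weq c) (hcq : c ≫ qt = g)
    {J : C} {j : J ⟶ B} (hj : P.IsJoin h g j) :
    ∃ (Z'' : C) (i'' : P₁ ⟶ Z'') (σ'' : Z'' ⟶ E₁) (J' : C) (a'' : A' ⟶ J') (bz'' : Z'' ⟶ J')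
      (j' : J' ⟶ B') (δ : J ⟶ J'),
      P.cofib i'' ∧ P.weq σ'' ∧ i'' ≫ σ'' = f₁ ∧ IsPushout pb₁ i'' a'' bz'' ∧
      a'' ≫ j' = h' ∧ bz'' ≫ j' = σ'' ≫ q₁ ∧ P.weq δ ∧ j ≫ β = δ ≫ j' := by
  obtain ⟨E, τ, q, hτ, hq, hfac, Pj, Z, fb, pb, i, σ, a, bz, hPj, hic, hσ, hiσ, hPO, haj, hbzj⟩ := hj
  obtain ⟨P₂, f₂, p₂, hP₂, hp₂⟩ := P.pb_exists qt h hqt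
  obtain ⟨w, u₀, hww, hwqt, hu₀, hu₀p, hu₀f⟩ :=
    fcomp hc hq hqt hτ hcw (by rw [hfac, hcq]) hPj hP₂
  have het : P.weq et := (P.pb_weq hq₁ hpbt).1 hβ
  have hfib₁ : P.fib pb₁ := fib_of_pb hq₁ hP₁
  -- v₂ : P₂ ⟶ P₁
  have hpaste : IsPullback (f₂ ≫ et) p₂ q₁ (h ≫ β) := hP₂.paste_horiz hpbt
  rw [hsq] at hpaste
  let v₂ : P₂ ⟶ P₁ := hP₁.lift (f₂ ≫ et) (p₂ ≫ γ)
    (by rw [Category.assoc, hpbt.w, ← Category.assoc, hP₂.w]; simp only [Category.assoc, hsq])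
  have hbig : IsPullback (v₂ ≫ f₁) p₂ q₁ (γ ≫ h') := by rw [hP₁.lift_fst]; exact hpaste
  have hsql : IsPullback v₂ p₂ pb₁ γ := hbig.of_right (hP₁.lift_snd _ _ _) hP₁
  have hv₂ : P.weq v₂ := (P.pb_weq hfib₁ hsql).1 hγ
  -- total comparison of pullbacks
  let u : Pj ⟶ P₁ := u₀ ≫ v₂
  have hu : P.weq u := P.weq_comp hu₀ hv₂
  have hupb : u ≫ pb₁ = pb ≫ γ := by
    rw [Category.assoc]
    show u₀ ≫ v₂ ≫ pb₁ = pb ≫ γ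
    rw [hP₁.lift_snd, ← Category.assoc, hu₀p]
  have huf : u ≫ f₁ = fb ≫ w ≫ et := by
    show (u₀ ≫ v₂) ≫ f₁ = fb ≫ w ≫ et
    rw [Category.assoc, hP₁.lift_fst, ← Category.assoc, hu₀f, Category.assoc]
  -- transport the pushout
  obtain ⟨Z'', J', i'', ζ, bz'', a'', δ, hci'', hζ, hpo1, hpo2, hδ, hbzδ, haδ⟩ :=
    push hic hPO.flip hu hγ hupb
  -- the new C-factorisation
  have hσcompat : i ≫ (σ ≫ w ≫ et) = u ≫ f₁ := by
    rw [huf, ← Category.assoc, hiσ]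
  let σ'' : Z'' ⟶ E₁ := hpo1.desc (σ ≫ w ≫ et) f₁ hσcompat
  have hζσ : ζ ≫ σ'' = σ ≫ w ≫ et := hpo1.inl_desc _ _ _
  have hi''σ : i'' ≫ σ'' = f₁ := hpo1.inr_desc _ _ _
  have hσ'' : P.weq σ'' := P.weq_of_comp_right hζ
    (by rw [hζσ]; exact P.weq_comp hσ (P.weq_comp hww het))
  -- the new join morphism
  have hjcompat : i'' ≫ (σ'' ≫ q₁) = pb₁ ≫ h' := by
    rw [← Category.assoc, hi''σ, hP₁.w]
  let j' : J' ⟶ B' := hpo2.desc (σ'' ≫ q₁) h' hjcompat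
  have hbz''j' : bz'' ≫ j' = σ'' ≫ q₁ := hpo2.inl_desc _ _ _
  have ha''j' : a'' ≫ j' = h' := hpo2.inr_desc _ _ _
  refine ⟨Z'', i'', σ'', J', a'', bz'', j', δ, hci'', hσ'', hi''σ, hpo2.flip, ha''j', hbz''j',
    hδ, ?_⟩
  -- j ≫ β = δ ≫ j'
  apply hPO.hom_ext
  · simp only [← Category.assoc]
    rw [haj, haδ, hsq, Category.assoc, ha''j']
  · simp only [← Category.assoc]
    rw [hbzj, hbzδ, Category.assoc ζ, hbz''j']
    calc (σ ≫ q) ≫ β = σ ≫ w ≫ (qt ≫ β) := by rw [← hwqt]; simp [Category.assoc]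
    _ = σ ≫ w ≫ et ≫ q₁ := by rw [← hpbt.w]
    _ = ζ ≫ σ'' ≫ q₁ := by rw [← Category.assoc ζ, hζσ]; simp [Category.assoc]

/-- Backward transport of a join along a weak equivalence of pairs. -/
lemma step_b (hc : ∀ X : C, P.CofModel X)
    {A B A' B' Ep Ep' : C}
    {h : A ⟶ B} {h' : A' ⟶ B'} {g : Ep ⟶ B} {g' : Ep' ⟶ B'}
    {γ : A ⟶ A'} {β : B ⟶ B'} {α : Ep ⟶ Ep'}
    (hγ : P.weq γ) (hβ : P.weq β) (hsq : h ≫ β = γ ≫ h')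
    (hα : P.weq α) (hgsq : g ≫ β = α ≫ g')
    {J'' : C} {j'' : J'' ⟶ B'} (hj'' : P.IsJoin h' g' j'') :
    ∃ (J : C) (j : J ⟶ B) (J₂ : C) (j₂ : J₂ ⟶ B') (δ : J ⟶ J₂),
      P.IsJoin h g j ∧ P.IsJoin h' g' j₂ ∧ P.weq δ ∧ j ≫ β = δ ≫ j₂ := by
  obtain ⟨E', τ', q', hτ', hq', hfac', Pq, Z', f', pb', i', σ', a', bz', hP', hic', hσ', hiσ',
    hPO', haj', hbzj'⟩ := hj''
  obtain ⟨Eh, eh, qh, hEh, hqh⟩ := P.pb_exists q' β hq'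
  have heh : P.weq eh := (P.pb_weq hq' hEh).1 hβ
  let τh : Ep ⟶ Eh := hEh.lift (α ≫ τ') g (by rw [Category.assoc, hfac', ← hgsq])
  have hτh : P.weq τh := P.weq_of_comp_left heh
    (by rw [hEh.lift_fst]; exact P.weq_comp hα hτ')
  obtain ⟨Pj, fh, ph, hPj, hph⟩ := P.pb_exists qh h hqh
  -- u : Pj ⟶ Pq
  have hpaste : IsPullback (fh ≫ eh) ph q' (h ≫ β) := hPj.paste_horiz hEh
  rw [hsq] at hpaste
  let u : Pj ⟶ Pq := hP'.lift (fh ≫ eh) (ph ≫ γ)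
    (by rw [Category.assoc, hEh.w, ← Category.assoc, hPj.w]; simp only [Category.assoc, hsq])
  have hbig : IsPullback (u ≫ f') ph q' (γ ≫ h') := by rw [hP'.lift_fst]; exact hpaste
  have hsql : IsPullback u ph pb' γ := hbig.of_right (hP'.lift_snd _ _ _) hP'
  have hfibpb' : P.fib pb' := fib_of_pb hq' hP'
  have hu : P.weq u := (P.pb_weq hfibpb' hsql).1 hγ
  -- construct the join on the source side
  obtain ⟨Z, i, σ, hi, hσ, hiσ⟩ := P.C_fac fh
  obtain ⟨J, bz, a, hJpo, hca⟩ := P.po_exists i ph hi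
  have hjc : i ≫ (σ ≫ qh) = ph ≫ h := by rw [← Category.assoc, hiσ, hPj.w]
  let j : J ⟶ B := hJpo.desc (σ ≫ qh) h hjc
  have hbzj : bz ≫ j = σ ≫ qh := hJpo.inl_desc _ _ _
  have haj : a ≫ j = h := hJpo.inr_desc _ _ _
  have hjoin : P.IsJoin h g j :=
    ⟨Eh, τh, qh, hτh, hqh, hEh.lift_snd _ _ _, Pj, Z, fh, ph, i, σ, a, bz, hPj, hi, hσ, hiσ,
      hJpo.flip, haj, hbzj⟩
  -- transport it to the target side
  obtain ⟨Z₂, J₂, i₂, ζ, bz₂, a₂, δ, hci₂, hζ, hpo1, hpo2, hδ, hbzδ, haδ⟩ :=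
    push hi hJpo hu hγ (hP'.lift_snd _ _ _)
  have hσcompat : i ≫ (σ ≫ eh) = u ≫ f' := by
    rw [hP'.lift_fst, ← Category.assoc, hiσ]
  let σ₂ : Z₂ ⟶ E' := hpo1.desc (σ ≫ eh) f' hσcompat
  have hζσ : ζ ≫ σ₂ = σ ≫ eh := hpo1.inl_desc _ _ _
  have hi₂σ : i₂ ≫ σ₂ = f' := hpo1.inr_desc _ _ _
  have hσ₂ : P.weq σ₂ := P.weq_of_comp_right hζ (by rw [hζσ]; exact P.weq_comp hσ heh)
  have hjc₂ : i₂ ≫ (σ₂ ≫ q') = pb' ≫ h' := by rw [← Category.assoc, hi₂σ, hP'.w]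
  let j₂ : J₂ ⟶ B' := hpo2.desc (σ₂ ≫ q') h' hjc₂
  have hbzj₂ : bz₂ ≫ j₂ = σ₂ ≫ q' := hpo2.inl_desc _ _ _
  have haj₂ : a₂ ≫ j₂ = h' := hpo2.inr_desc _ _ _
  have hjoin₂ : P.IsJoin h' g' j₂ :=
    ⟨E', τ', q', hτ', hq', hfac', Pq, Z₂, f', pb', i₂, σ₂, a₂, bz₂, hP', hci₂, hσ₂, hi₂σ,
      hpo2.flip, haj₂, hbzj₂⟩
  refine ⟨J, j, J₂, j₂, δ, hjoin, hjoin₂, hδ, ?_⟩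
  apply hJpo.hom_ext
  · simp only [← Category.assoc]
    rw [hbzj, hbzδ, Category.assoc ζ, hbzj₂, ← Category.assoc ζ, hζσ]
    simp only [Category.assoc]
    rw [hEh.w]
  · simp only [← Category.assoc]
    rw [haj, haδ, hsq, Category.assoc, haj₂]


/-- Two joins built on the same fibrant replacement and pullback, but with
different C-factorisations and pushouts, are connected by weak equivalences
over the base. -/
lemma jcore {A' B' E₁ Pp : C} {q₁ : E₁ ⟶ B'} {h' : A' ⟶ B'} {f₁ : Pp ⟶ E₁} {pb₁ : Pp ⟶ A'}
    (hw : f₁ ≫ q₁ = pb₁ ≫ h')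
    {Z Z' Jz Jz' : C} {i : Pp ⟶ Z} {σ : Z ⟶ E₁} {i' : Pp ⟶ Z'} {σ' : Z' ⟶ E₁}
    (hi : P.cofib i) (hσ : P.weq σ) (hiσ : i ≫ σ = f₁)
    (hi' : P.cofib i') (hσ' : P.weq σ') (hiσ' : i' ≫ σ' = f₁)
    {a : A' ⟶ Jz} {bz : Z ⟶ Jz} (hPO : IsPushout pb₁ i a bz)
    {j : Jz ⟶ B'} (haj : a ≫ j = h') (hbzj : bz ≫ j = σ ≫ q₁)
    {a' : A' ⟶ Jz'} {bz' : Z' ⟶ Jz'} (hPO' : IsPushout pb₁ i' a' bz')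
    {j' : Jz' ⟶ B'} (haj' : a' ≫ j' = h') (hbzj' : bz' ≫ j' = σ' ≫ q₁) :
    relB P ⟨Jz, j⟩ ⟨Jz', j'⟩ := by
  obtain ⟨V, vl, vr, hV, hcvr⟩ := P.po_exists i i' hi
  have hcvl : P.cofib vl := cofib_of_po hi' hV.flip
  let cm : V ⟶ E₁ := hV.desc σ σ' (by rw [hiσ, hiσ'])
  obtain ⟨U, k, σU, hk, hσU, hkσU⟩ := P.C_fac cm
  have hk₁σ : (vl ≫ k) ≫ σU = σ := by rw [Category.assoc, hkσU]; exact hV.inl_desc _ _ _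
  have hk₂σ : (vr ≫ k) ≫ σU = σ' := by rw [Category.assoc, hkσU]; exact hV.inr_desc _ _ _
  have hk₁c : P.cofib (vl ≫ k) := P.cofib_comp hcvl hk
  have hk₂c : P.cofib (vr ≫ k) := P.cofib_comp hcvr hk
  have hk₁w : P.weq (vl ≫ k) := P.weq_of_comp_left hσU (by rw [hk₁σ]; exact hσ)
  have hk₂w : P.weq (vr ≫ k) := P.weq_of_comp_left hσU (by rw [hk₂σ]; exact hσ')
  have hiU : i ≫ (vl ≫ k) = i' ≫ (vr ≫ k) := by
    rw [← Category.assoc, hV.w, Category.assoc]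
  have hcofiU : P.cofib (i ≫ (vl ≫ k)) := P.cofib_comp hi hk₁c
  obtain ⟨JU, bzU, aU, hJU, _⟩ := P.po_exists (i ≫ (vl ≫ k)) pb₁ hcofiU
  have hjUc : (i ≫ (vl ≫ k)) ≫ (σU ≫ q₁) = pb₁ ≫ h' := by
    have h1 : i ≫ (vl ≫ k) ≫ σU = f₁ := by rw [hk₁σ, hiσ]
    calc (i ≫ (vl ≫ k)) ≫ (σU ≫ q₁) = (i ≫ (vl ≫ k) ≫ σU) ≫ q₁ := by
          simp only [Category.assoc]
    _ = f₁ ≫ q₁ := by rw [h1]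
    _ = pb₁ ≫ h' := hw
  let jU : JU ⟶ B' := hJU.desc (σU ≫ q₁) h' hjUc
  have hbzUjU : bzU ≫ jU = σU ≫ q₁ := hJU.inl_desc _ _ _
  have haUjU : aU ≫ jU = h' := hJU.inr_desc _ _ _
  -- the comparison from Jz
  have hδc : pb₁ ≫ aU = i ≫ ((vl ≫ k) ≫ bzU) := by
    rw [← hJU.w, Category.assoc]
  let δ : Jz ⟶ JU := hPO.desc aU ((vl ≫ k) ≫ bzU) hδc
  have haδ : a ≫ δ = aU := hPO.inl_desc _ _ _
  have hbzδ : bz ≫ δ = (vl ≫ k) ≫ bzU := hPO.inr_desc _ _ _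
  have hδw : P.weq δ := push2 hk₁c hk₁w hPO.flip hJU hbzδ haδ
  have hδj : δ ≫ jU = j := by
    apply hPO.hom_ext
    · rw [← Category.assoc, haδ, haUjU, haj]
    · rw [← Category.assoc, hbzδ, Category.assoc, hbzUjU, ← Category.assoc, hk₁σ, hbzj]
  -- the comparison from Jz'
  have hJU' : IsPushout (i' ≫ (vr ≫ k)) pb₁ bzU aU := by rw [← hiU]; exact hJU
  have hδc' : pb₁ ≫ aU = i' ≫ ((vr ≫ k) ≫ bzU) := by
    rw [← hJU'.w, Category.assoc]
  let δ' : Jz' ⟶ JU := hPO'.desc aU ((vr ≫ k) ≫ bzU) hδc'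
  have haδ' : a' ≫ δ' = aU := hPO'.inl_desc _ _ _
  have hbzδ' : bz' ≫ δ' = (vr ≫ k) ≫ bzU := hPO'.inr_desc _ _ _
  have hδw' : P.weq δ' := push2 hk₂c hk₂w hPO'.flip hJU' hbzδ' haδ'
  have hδj' : δ' ≫ jU = j' := by
    apply hPO'.hom_ext
    · rw [← Category.assoc, haδ', haUjU, haj']
    · rw [← Category.assoc, hbzδ', Category.assoc, hbzUjU, ← Category.assoc, hk₂σ, hbzj']
  exact Relation.EqvGen.trans _ _ _
    (relB.of_step δ hδw hδj.symm)
    (Relation.EqvGen.symm _ _ (relB.of_step δ' hδw' hδj'.symm))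

/-- Any two joins of the same pair of morphisms are connected by weak
equivalences over the base. -/
lemma join_unique (hc : ∀ X : C, P.CofModel X) {A B Ep : C} {f : A ⟶ B} {g : Ep ⟶ B}
    {J₁ J₂ : C} {j₁ : J₁ ⟶ B} {j₂ : J₂ ⟶ B}
    (h₁ : P.IsJoin f g j₁) (h₂ : P.IsJoin f g j₂) : relB P ⟨J₁, j₁⟩ ⟨J₂, j₂⟩ := by
  obtain ⟨E', τ', q', hτ', hq', hfac', Pq, Z', f', pb', i', σ', a', bz', hP', hic', hσ', hiσ',
    hPO', haj', hbzj'⟩ := h₂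
  have hid : IsPullback (𝟙 E') q' q' (𝟙 B) :=
    IsPullback.of_horiz_isIso ⟨by rw [Category.id_comp, Category.comp_id]⟩
  obtain ⟨Z'', i'', σ'', J₃, a'', bz'', j₃, δ, hci'', hσ'', hi''σ, hPO'', ha''j₃, hbz''j₃,
    hδ, hcomp⟩ :=
    step_core hc (weq_id A) (weq_id B)
      (by rw [Category.id_comp, Category.comp_id]) hτ' hq' hfac' hP' hq' hid hτ' hfac' h₁
  have hσet : i'' ≫ (σ'' ≫ 𝟙 E') = f' := by rw [Category.comp_id]; exact hi''σ
  refine Relation.EqvGen.trans _ _ _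
    (relB.of_step δ hδ (by rw [← hcomp, Category.comp_id])) ?_
  exact jcore hP'.w hci'' hσ'' hi''σ hic' hσ' hiσ' hPO''.flip.flip ha''j₃ hbz''j₃ hPO'
    haj' hbzj'

/-- Joins transport along zigzags of weak equivalences over the base, in both
directions. -/
lemma join_transport (hc : ∀ X : C, P.CofModel X) {B Ep : C} {g : Ep ⟶ B} {u v : Ov B}
    (hrel : relB P u v) :
    (∀ {J : C} (j : J ⟶ B), P.IsJoin u.2 g j →
      ∃ (J' : C) (j' : J' ⟶ B), P.IsJoin v.2 g j' ∧ relB P ⟨J, j⟩ ⟨J', j'⟩) ∧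
    (∀ {J' : C} (j' : J' ⟶ B), P.IsJoin v.2 g j' →
      ∃ (J : C) (j : J ⟶ B), P.IsJoin u.2 g j ∧ relB P ⟨J, j⟩ ⟨J', j'⟩) := by
  induction hrel with
  | rel u v hst =>
    obtain ⟨e, he, heq⟩ := hst
    have hsq : u.2 ≫ 𝟙 B = e ≫ v.2 := by rw [Category.comp_id, heq]
    constructor
    · intro J j hj
      obtain ⟨E₁, τ₁, q₁, hτ₁, hq₁, hfac₁⟩ := P.F_fac g
      obtain ⟨P₁, f₁, pb₁, hP₁, _⟩ := P.pb_exists q₁ v.2 hq₁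
      have hid : IsPullback (𝟙 E₁) q₁ q₁ (𝟙 B) :=
        IsPullback.of_horiz_isIso ⟨by rw [Category.id_comp, Category.comp_id]⟩
      obtain ⟨Z'', i'', σ'', J', a'', bz'', j', δ, hci'', hσ'', hi''σ, hPO'', ha''j', hbz''j',
        hδ, hcomp⟩ :=
        step_core hc he (weq_id B) hsq hτ₁ hq₁ hfac₁ hP₁ hq₁ hid hτ₁ hfac₁ hj
      refine ⟨J', j', ⟨E₁, τ₁, q₁, hτ₁, hq₁, hfac₁, P₁, Z'', f₁, pb₁, i'', σ'', a'', bz'',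
        hP₁, hci'', hσ'', hi''σ, hPO'', ha''j', hbz''j'⟩, ?_⟩
      exact relB.of_step δ hδ (by rw [← hcomp, Category.comp_id])
    · intro J' j' hj'
      obtain ⟨J, j, J₂, j₂, δ, hj₁, hj₂, hδ, hcomp⟩ :=
        step_b hc he (weq_id B) hsq (weq_id Ep)
          (by rw [Category.id_comp, Category.comp_id]) hj'
      refine ⟨J, j, hj₁, Relation.EqvGen.trans _ _ _
        (relB.of_step δ hδ (by rw [← hcomp, Category.comp_id]))
        (join_unique hc hj₂ hj')⟩
  | refl u =>
    exact ⟨fun j hj => ⟨_, j, hj, Relation.EqvGen.refl _⟩,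
      fun j hj => ⟨_, j, hj, Relation.EqvGen.refl _⟩⟩
  | symm u v _ ih =>
    constructor
    · intro J j hj
      obtain ⟨J', j', hj', hr⟩ := ih.2 j hj
      exact ⟨J', j', hj', Relation.EqvGen.symm _ _ hr⟩
    · intro J j hj
      obtain ⟨J', j', hj', hr⟩ := ih.1 j hj
      exact ⟨J', j', hj', Relation.EqvGen.symm _ _ hr⟩
  | trans u v w _ _ ih₁ ih₂ =>
    constructor
    · intro J j hj
      obtain ⟨J', j', hj', hrel'⟩ := ih₁.1 j hj
      obtain ⟨J'', j'', hj'', hrel''⟩ := ih₂.1 j' hj'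
      exact ⟨J'', j'', hj'', Relation.EqvGen.trans _ _ _ hrel' hrel''⟩
    · intro J j hj
      obtain ⟨J', j', hj', hrel'⟩ := ih₂.2 j hj
      obtain ⟨J'', j'', hj'', hrel''⟩ := ih₁.2 j' hj'
      exact ⟨J'', j'', hj'', Relation.EqvGen.trans _ _ _ hrel'' hrel'⟩


/-- Forward transport of iterated joins along a weak equivalence of morphisms. -/
lemma iter_fwd (hc : ∀ X : C, P.CofModel X) {Ep B Ep' B' : C}
    {g : Ep ⟶ B} {g' : Ep' ⟶ B'} {α : Ep ⟶ Ep'} {β : B ⟶ B'}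
    (hα : P.weq α) (hβ : P.weq β) (hgsq : g ≫ β = α ≫ g')
    {n : ℕ} {X : C} {h : X ⟶ B} (hj : P.IsIterJoin g n h) :
    ∃ (Y : C) (h' : Y ⟶ B') (γ : X ⟶ Y),
      P.IsIterJoin g' n h' ∧ P.weq γ ∧ h ≫ β = γ ≫ h' := by
  induction hj with
  | zero => exact ⟨Ep', g', α, .zero, hα, hgsq⟩
  | @succ n X Y h h₁ hprev hjoin ih =>
    obtain ⟨Y', h', γ, hiter, hγ, hsq⟩ := ih
    obtain ⟨E₁, τ₁, q₁, hτ₁, hq₁, hfac₁⟩ := P.F_fac g'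
    obtain ⟨P₁, f₁, pb₁, hP₁, _⟩ := P.pb_exists q₁ h' hq₁
    obtain ⟨Et, et, qt, hpbt, hqt⟩ := P.pb_exists q₁ β hq₁
    have het : P.weq et := (P.pb_weq hq₁ hpbt).1 hβ
    let c : Ep ⟶ Et := hpbt.lift (α ≫ τ₁) g (by rw [Category.assoc, hfac₁, ← hgsq])
    have hcw : P.weq c := P.weq_of_comp_left het
      (by rw [hpbt.lift_fst]; exact P.weq_comp hα hτ₁)
    obtain ⟨Z'', i'', σ'', J', a'', bz'', j', δ, hci'', hσ'', hi''σ, hPO'', ha''j', hbz''j',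
      hδ, hcomp⟩ :=
      step_core hc hγ hβ hsq hτ₁ hq₁ hfac₁ hP₁ hqt hpbt hcw (hpbt.lift_snd _ _ _) hjoin
    have hjoin' : P.IsJoin h' g' j' :=
      ⟨E₁, τ₁, q₁, hτ₁, hq₁, hfac₁, P₁, Z'', f₁, pb₁, i'', σ'', a'', bz'', hP₁, hci'', hσ'',
        hi''σ, hPO'', ha''j', hbz''j'⟩
    exact ⟨J', j', δ, hiter.succ hjoin', hδ, hcomp⟩

/-- Backward transport of iterated joins along a weak equivalence of morphisms. -/
lemma iter_bwd (hc : ∀ X : C, P.CofModel X) {Ep B Ep' B' : C}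
    {g : Ep ⟶ B} {g' : Ep' ⟶ B'} {α : Ep ⟶ Ep'} {β : B ⟶ B'}
    (hα : P.weq α) (hβ : P.weq β) (hgsq : g ≫ β = α ≫ g')
    {n : ℕ} {Y : C} {h' : Y ⟶ B'} (hj : P.IsIterJoin g' n h') :
    ∃ (X : C) (h : X ⟶ B) (Y₂ : C) (h₂ : Y₂ ⟶ B') (γ : X ⟶ Y₂),
      P.IsIterJoin g n h ∧ P.IsIterJoin g' n h₂ ∧ relB P ⟨Y₂, h₂⟩ ⟨Y, h'⟩ ∧
      P.weq γ ∧ h ≫ β = γ ≫ h₂ := by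
  induction hj with
  | zero => exact ⟨Ep, g, Ep', g', α, .zero, .zero, Relation.EqvGen.refl _, hα, hgsq⟩
  | @succ n Y Y' h₀' h₁' hprev hjoin ih =>
    obtain ⟨X, h₀, Y₂, h₂, γ, hit, hit₂, hrel, hγ, hsq⟩ := ih
    obtain ⟨J₃, j₃, hj₃, hrel₃⟩ := (join_transport hc (g := g') hrel).2 h₁' hjoin
    obtain ⟨J₄, j₄, J₅, j₅, δ, hj₄, hj₅, hδ, hcomp⟩ :=
      step_b hc hγ hβ hsq hα hgsq hj₃
    exact ⟨J₄, j₄, J₅, j₅, δ, hit.succ hj₄, hit₂.succ hj₅,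
      Relation.EqvGen.trans _ _ _ (join_unique hc hj₅ hj₃) hrel₃, hδ, hcomp⟩

/-- `Gsecat` is antitone along a weak equivalence of morphisms (forward direction). -/
lemma gsecat_le_fwd (hc : ∀ X : C, P.CofModel X) {Ep B Ep' B' : C}
    {g : Ep ⟶ B} {g' : Ep' ⟶ B'} {α : Ep ⟶ Ep'} {β : B ⟶ B'}
    (hα : P.weq α) (hβ : P.weq β) (hgsq : g ≫ β = α ≫ g') :
    P.Gsecat g' ≤ P.Gsecat g := by
  apply sInf_le_sInf
  rintro n ⟨m, rfl, X, h, hit, hws⟩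
  obtain ⟨Y, h', γ, hit', hγ, hsq⟩ := iter_fwd hc hα hβ hgsq hit
  exact ⟨m, rfl, Y, h', hit', hws_fwd hc hβ hsq hws⟩

/-- `Gsecat` is antitone along a weak equivalence of morphisms (backward direction). -/
lemma gsecat_le_bwd (hc : ∀ X : C, P.CofModel X) {Ep B Ep' B' : C}
    {g : Ep ⟶ B} {g' : Ep' ⟶ B'} {α : Ep ⟶ Ep'} {β : B ⟶ B'}
    (hα : P.weq α) (hβ : P.weq β) (hgsq : g ≫ β = α ≫ g') :
    P.Gsecat g ≤ P.Gsecat g' := by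
  apply sInf_le_sInf
  rintro n ⟨m, rfl, Y, h', hit, hws⟩
  obtain ⟨X, h, Y₂, h₂, γ, hitg, hitg', hrel, hγ, hsq⟩ := iter_bwd hc hα hβ hgsq hit
  have hws₂ : P.HasWeakSection h₂ :=
    (hws_iff_of_relB hc (u := ⟨Y₂, h₂⟩) (v := ⟨Y, h'⟩) hrel).2 hws
  exact ⟨m, rfl, X, h, hitg, hws_bwd hγ hβ hsq hws₂⟩

/-- `Gsecat` is invariant under zigzags of weak equivalences of morphisms. -/
lemma gsecat_eq_of_weaklyEquivMor (hc : ∀ X : C, P.CofModel X) {u v : Arrow C}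
    (hrel : P.WeaklyEquivMor u v) : P.Gsecat u.hom = P.Gsecat v.hom := by
  induction hrel with
  | rel u v hst =>
    obtain ⟨φ, hl, hr⟩ := hst
    have hw : u.hom ≫ φ.right = φ.left ≫ v.hom := (Arrow.w φ).symm
    exact le_antisymm (gsecat_le_bwd hc hl hr hw) (gsecat_le_fwd hc hl hr hw)
  | refl u => rfl
  | symm u v _ ih => exact ih.symm
  | trans u v w _ _ ih₁ ih₂ => exact ih₁.trans ih₂


section Functorial

universe v₂ u₂
variable {D : Type u₂} [Category.{v₂} D] [HasZeroObject D] [HasZeroMorphisms D]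
variable {Q : PreJCat D}

/-- Modelization functors preserve weak sections (after refactorisation). -/
lemma hws_map (μ : ModelizationFunctor P Q) {X B : C} {h : X ⟶ B}
    (hw : P.HasWeakSection h) : Q.HasWeakSection (μ.F.map h) := by
  obtain ⟨E, τ, q, hτ, hq, hfac, s, hs⟩ := hw
  obtain ⟨E₂, ρ, q₂, hρ, hq₂, hfac₂⟩ := Q.F_fac (μ.F.map q)
  refine ⟨E₂, μ.F.map τ ≫ ρ, q₂, Q.weq_comp (μ.map_weq τ hτ) hρ, hq₂, ?_,
    μ.F.map s ≫ ρ, ?_⟩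
  · rw [Category.assoc, hfac₂, ← Functor.map_comp, hfac]
  · rw [Category.assoc, hfac₂, ← Functor.map_comp, hs]; exact μ.F.map_id B

/-- A strict pullback of a fibration is a homotopy pullback. -/
lemma hpb_of_pullback {E B A Pt : C} {q : E ⟶ B} {f : A ⟶ B} {fb : Pt ⟶ E} {pb : Pt ⟶ A}
    (hq : P.fib q) (hsq : IsPullback fb pb q f) : P.IsHPB fb pb q f :=
  ⟨hsq.w, E, 𝟙 E, q, weq_id E, hq, Category.id_comp q, Pt, fb, pb, hsq, 𝟙 Pt,
    weq_id Pt, by rw [Category.id_comp, Category.comp_id], Category.id_comp pb⟩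

/-- A strict pushout of a cofibration is a homotopy pushout. -/
lemma hpo_of_pushout {Pp Z A Q' : C} {i : Pp ⟶ Z} {g : Pp ⟶ A} {inl : Z ⟶ Q'} {inr : A ⟶ Q'}
    (hi : P.cofib i) (hsq : IsPushout i g inl inr) : P.IsHPO i g inl inr :=
  ⟨hsq.w, Z, i, 𝟙 Z, hi, weq_id Z, Category.comp_id i, Q', inl, inr, hsq, 𝟙 Q',
    weq_id Q', by rw [Category.comp_id, Category.id_comp], Category.comp_id inr⟩

/-- The image of a join under a modelization functor is weakly equivalent over
the base to an honest join of the images. -/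
lemma map_join_strict (μ : ModelizationFunctor P Q) {A B Ep J : C}
    {h₀ : A ⟶ B} {g : Ep ⟶ B} {h₁ : J ⟶ B} (hjoin : P.IsJoin h₀ g h₁) :
    ∃ (J' : D) (j' : J' ⟶ μ.F.obj B),
      Q.IsJoin (μ.F.map h₀) (μ.F.map g) j' ∧
      relB Q ⟨μ.F.obj J, μ.F.map h₁⟩ ⟨J', j'⟩ := by
  obtain ⟨E, τ, q, hτ, hq, hfac, Pj, Z, fb, pb, i, σ, a, bz, hPj, hic, hσ, hiσ, hPO, haj,
    hbzj⟩ := hjoin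
  -- homotopy pullback and pushout data in D
  obtain ⟨-, E₂, τ₂, q₂, hτ₂, hq₂, hfac₂, Pt, pr1, pr2, hPt, w, hww, hw1, hw2⟩ :=
    μ.map_hpb (hpb_of_pullback hq hPj)
  obtain ⟨-, Z₃, i₃, σ₃, hci₃, hσ₃, hfac₃, Q₃, inl₃, inr₃, hQ₃, w₃, hww₃, h31, h32⟩ :=
    μ.map_hpo (hpo_of_pushout hic hPO.flip)
  -- transport the pushout along w
  obtain ⟨Z₅, J₅, i₅, ζ₅, bz₅, a₅, δ₅, hci₅, hζ₅, hpo1, hpo2, hδ₅, hbzδ₅, haδ₅⟩ :=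
    push hci₃ hQ₃ hww (weq_id (μ.F.obj A)) (g'' := pr2)
      (by rw [hw2, Category.comp_id])
  -- C-factorisation for the strict join
  have hμiσ : μ.F.map i ≫ μ.F.map σ = μ.F.map fb := by rw [← Functor.map_comp, hiσ]
  have hσc : i₃ ≫ (σ₃ ≫ μ.F.map σ ≫ τ₂) = w ≫ pr1 := by
    rw [hw1]
    calc i₃ ≫ σ₃ ≫ μ.F.map σ ≫ τ₂ = ((i₃ ≫ σ₃) ≫ μ.F.map σ) ≫ τ₂ := by
          simp only [Category.assoc]
    _ = μ.F.map fb ≫ τ₂ := by rw [hfac₃, hμiσ]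
  let σ₅ : Z₅ ⟶ E₂ := hpo1.desc (σ₃ ≫ μ.F.map σ ≫ τ₂) pr1 hσc
  have hζσ₅ : ζ₅ ≫ σ₅ = σ₃ ≫ μ.F.map σ ≫ τ₂ := hpo1.inl_desc _ _ _
  have hi₅σ : i₅ ≫ σ₅ = pr1 := hpo1.inr_desc _ _ _
  have hσ₅ : Q.weq σ₅ := Q.weq_of_comp_right hζ₅
    (by rw [hζσ₅]; exact Q.weq_comp hσ₃ (Q.weq_comp (μ.map_weq σ hσ) hτ₂))
  -- the strict join morphism
  have hj₅c : i₅ ≫ (σ₅ ≫ q₂) = pr2 ≫ μ.F.map h₀ := by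
    rw [← Category.assoc, hi₅σ, hPt.w]
  let j₅ : J₅ ⟶ μ.F.obj B := hpo2.desc (σ₅ ≫ q₂) (μ.F.map h₀) hj₅c
  have hbzj₅ : bz₅ ≫ j₅ = σ₅ ≫ q₂ := hpo2.inl_desc _ _ _
  have haj₅ : a₅ ≫ j₅ = μ.F.map h₀ := hpo2.inr_desc _ _ _
  have hjoin₅ : Q.IsJoin (μ.F.map h₀) (μ.F.map g) j₅ :=
    ⟨E₂, μ.F.map τ ≫ τ₂, q₂, Q.weq_comp (μ.map_weq τ hτ) hτ₂, hq₂,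
      (by rw [Category.assoc, hfac₂, ← Functor.map_comp, hfac]), Pt, Z₅, pr1, pr2, i₅, σ₅,
      a₅, bz₅, hPt, hci₅, hσ₅, hi₅σ, hpo2.flip, haj₅, hbzj₅⟩
  -- the zigzag
  have hμbz : μ.F.map bz ≫ μ.F.map h₁ = μ.F.map σ ≫ μ.F.map q := by
    rw [← Functor.map_comp, ← Functor.map_comp, hbzj]
  have hδj₅ : δ₅ ≫ j₅ = w₃ ≫ μ.F.map h₁ := by
    apply hQ₃.hom_ext
    · rw [← Category.assoc, hbzδ₅, Category.assoc ζ₅, hbzj₅, ← Category.assoc ζ₅, hζσ₅,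
        ← Category.assoc inl₃, h31]
      simp only [Category.assoc]
      rw [hfac₂, hμbz]
    · rw [← Category.assoc, haδ₅, Category.id_comp, haj₅, ← Category.assoc, h32,
        ← Functor.map_comp, haj]
  refine ⟨J₅, j₅, hjoin₅, ?_⟩
  exact Relation.EqvGen.trans _ _ _
    (Relation.EqvGen.symm _ _ (relB.of_step w₃ hww₃ rfl))
    (relB.of_step δ₅ hδ₅ hδj₅.symm)


/-- Iterated joins transport along a modelization functor, up to weak
equivalences over the base. -/
lemma iter_map (hd : ∀ X : D, Q.CofModel X) (μ : ModelizationFunctor P Q)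
    {Ep B : C} {g : Ep ⟶ B} {n : ℕ} {X : C} {h : X ⟶ B}
    (hj : P.IsIterJoin g n h) :
    ∃ (Y : D) (H : Y ⟶ μ.F.obj B),
      Q.IsIterJoin (μ.F.map g) n H ∧ relB Q ⟨μ.F.obj X, μ.F.map h⟩ ⟨Y, H⟩ := by
  induction hj with
  | zero => exact ⟨μ.F.obj Ep, μ.F.map g, .zero, Relation.EqvGen.refl _⟩
  | @succ n X Y h₀ h₁ hprev hjoin ih =>
    obtain ⟨Y', H, hit, hrel⟩ := ih
    obtain ⟨J', j', hj', hrel'⟩ := map_join_strict μ hjoin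
    obtain ⟨J'', j'', hj'', hrel''⟩ :=
      (join_transport hd (g := μ.F.map g) hrel).1 j' hj'
    exact ⟨J'', j'', hit.succ hj'',
      Relation.EqvGen.trans _ _ _ hrel' hrel''⟩

/-- A modelization functor does not increase the Ganea sectional category. -/
lemma gsecat_map_le (hd : ∀ X : D, Q.CofModel X) (μ : ModelizationFunctor P Q)
    {Ep B : C} (g : Ep ⟶ B) : Q.Gsecat (μ.F.map g) ≤ P.Gsecat g := by
  apply sInf_le_sInf
  rintro n ⟨m, rfl, X, h, hit, hws⟩
  obtain ⟨Y, H, hit', hrel⟩ := iter_map hd μ hit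
  exact ⟨m, rfl, Y, H, hit',
    (hws_iff_of_relB hd (u := ⟨μ.F.obj X, μ.F.map h⟩) (v := ⟨Y, H⟩) hrel).1
      (hws_map μ hws)⟩

end Functorial

end GsecatProof

end GsecatProofAux

/-- For modelization functors `μ : C → D` and `ν : D → C` between
J-categories with `ν(μ(p))` weakly equivalent to `p`, `secat (μ p) = secat p`. -/
theorem Gsecat_map_eq {D : Type u'} [Category.{v'} D] [HasZeroObject D]
    [HasZeroMorphisms D]
    (J : JCat C) (K : JCat D)
    (hc : ∀ X : C, J.toPreJCat.CofModel X)
    (hd : ∀ X : D, K.toPreJCat.CofModel X)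
    (μ : ModelizationFunctor J.toPreJCat K.toPreJCat)
    (ν : ModelizationFunctor K.toPreJCat J.toPreJCat)
    {E B : C} (p : E ⟶ B)
    (h : J.toPreJCat.WeaklyEquivMor (Arrow.mk (ν.F.map (μ.F.map p))) (Arrow.mk p)) :
    K.toPreJCat.Gsecat (μ.F.map p) = J.toPreJCat.Gsecat p := by
  refine le_antisymm (GsecatProof.gsecat_map_le hd μ p) ?_
  have h1 : J.toPreJCat.Gsecat p = J.toPreJCat.Gsecat (ν.F.map (μ.F.map p)) :=
    (GsecatProof.gsecat_eq_of_weaklyEquivMor hc h).symm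
  rw [h1]
  exact GsecatProof.gsecat_map_le hc ν (μ.F.map p)
end
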